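/- arXiv:1002.0094 — 9 statements merged into one kernel-verified Lean document; each statement's English description precedes it below -/
import Mathlib

section
/- For any finite collection of continuous almost periodic functions F_1, …, F_p on ℝ^p and any ε > 0, the set of common ε-almost periods of F_1, …, F_p that have integer coordinates (i.e., lie in ℤ^p) is relatively dense in ℝ^p. -/
open Metric Set MeasureTheory

/-- A set is relatively dense if some radius `R` works: every ball of radius `R` meets it. -/
def RelativelyDense {E : Type*} [PseudoMetricSpace E] (S : Set E) : Prop :=
  ∃ R : ℝ, 0 < R ∧ ∀ c : E, ∃ τ ∈ S, dist τ c < R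

/-- Bohr almost periodicity: for every `ε > 0` the set of `ε`-almost periods is relatively dense. -/
def AlmostPeriodic {E : Type*} [SeminormedAddCommGroup E] (f : E → ℝ) : Prop :=
  ∀ ε : ℝ, 0 < ε → RelativelyDense {τ : E | ∀ x : E, |f (x + τ) - f x| < ε}

section Aux

variable {E : Type*} [NormedAddCommGroup E] [ProperSpace E]

/-- A continuous almost periodic function is uniformly continuous. -/
lemma ap_uniform (f : E → ℝ) (hc : Continuous f) (hap : AlmostPeriodic f)
    {δ : ℝ} (hδ : 0 < δ) :
    ∃ η > 0, η ≤ 1 ∧ ∀ u v : E, dist u v ≤ η → |f u - f v| ≤ δ := by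
  obtain ⟨R, hR, hmem⟩ := hap (δ / 3) (by positivity)
  have hK : IsCompact (closedBall (0 : E) (R + 1)) := isCompact_closedBall _ _
  have huc := hK.uniformContinuousOn_of_continuous hc.continuousOn
  rw [Metric.uniformContinuousOn_iff] at huc
  obtain ⟨η₀, hη₀, h₀⟩ := huc (δ / 3) (by positivity)
  refine ⟨min (η₀ / 2) 1, by positivity, min_le_right _ _, fun u v huv => ?_⟩
  obtain ⟨τ, hτ, hd⟩ := hmem u
  have hd' : ‖u - τ‖ < R := by
    rw [← dist_eq_norm, dist_comm]; exact hd
  have h1 : u - τ ∈ closedBall (0 : E) (R + 1) := by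
    simp only [mem_closedBall, dist_zero_right]; linarith
  have h2 : v - τ ∈ closedBall (0 : E) (R + 1) := by
    simp only [mem_closedBall, dist_zero_right]
    have : ‖v - τ‖ ≤ ‖v - u‖ + ‖u - τ‖ := norm_sub_le_norm_sub_add_norm_sub v u τ
    have hvu : ‖v - u‖ ≤ 1 := by
      rw [← dist_eq_norm, dist_comm]
      exact huv.trans (min_le_right _ _)
    linarith
  have hmid : |f (u - τ) - f (v - τ)| < δ / 3 := by
    have hdist : dist (u - τ) (v - τ) < η₀ := by
      rw [dist_sub_right]
      exact lt_of_le_of_lt (huv.trans (min_le_left _ _)) (by linarith)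
    have := h₀ (u - τ) h1 (v - τ) h2 hdist
    rwa [Real.dist_eq] at this
  have h3 : |f u - f (u - τ)| < δ / 3 := by
    have := hτ (u - τ)
    rwa [sub_add_cancel] at this
  have h4 : |f v - f (v - τ)| < δ / 3 := by
    have := hτ (v - τ)
    rwa [sub_add_cancel] at this
  have := abs_sub_le (f u) (f (u - τ)) (f v)
  have := abs_sub_le (f (u - τ)) (f (v - τ)) (f v)
  have := abs_sub_comm (f (v - τ)) (f v)
  linarith

/-- The translates of a continuous almost periodic function admit a finite `δ`-net of times. -/
lemma ap_net (f : E → ℝ) (hc : Continuous f) (hap : AlmostPeriodic f)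
    {δ : ℝ} (hδ : 0 < δ) :
    ∃ A : Set E, A.Finite ∧ ∀ t : E, ∃ a ∈ A, ∀ x, |f (x + t) - f (x + a)| ≤ δ := by
  obtain ⟨η, hη, -, hu⟩ := ap_uniform f hc hap (δ := δ / 2) (by positivity)
  obtain ⟨R, hR, hmem⟩ := hap (δ / 2) (by positivity)
  have htb : TotallyBounded (closedBall (0 : E) R) :=
    (isCompact_closedBall _ _).totallyBounded
  rw [Metric.totallyBounded_iff] at htb
  obtain ⟨B, hBfin, hBsub⟩ := htb η hη
  refine ⟨B, hBfin, fun t => ?_⟩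
  obtain ⟨τ, hτ, hd⟩ := hmem t
  have h1 : t - τ ∈ closedBall (0 : E) R := by
    simp only [mem_closedBall, dist_zero_right]
    rw [← dist_eq_norm, dist_comm]
    exact hd.le
  obtain ⟨b, hbB, hb⟩ : ∃ b ∈ B, t - τ ∈ ball b η := by
    simpa using hBsub h1
  refine ⟨b, hbB, fun x => ?_⟩
  have e1 : |f (x + t) - f (x + (t - τ))| < δ / 2 := by
    have := hτ (x + (t - τ))
    have heq : x + (t - τ) + τ = x + t := by abel
    rwa [heq] at this
  have e2 : |f (x + (t - τ)) - f (x + b)| ≤ δ / 2 := by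
    apply hu
    rw [dist_add_left]
    exact (mem_ball.mp hb).le
  have := abs_sub_le (f (x + t)) (f (x + (t - τ))) (f (x + b))
  linarith

/-- Joint finite net for finitely many functions, by pigeonhole. -/
lemma joint_net {ι : Type*} [Finite ι] (H : ι → E → ℝ)
    (hnet : ∀ j, ∀ d : ℝ, 0 < d →
      ∃ A : Set E, A.Finite ∧ ∀ t : E, ∃ a ∈ A, ∀ x, |H j (x + t) - H j (x + a)| ≤ d)
    {δ : ℝ} (hδ : 0 < δ) :
    ∃ A : Set E, A.Finite ∧ ∀ t : E, ∃ a ∈ A, ∀ j x,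
      |H j (x + t) - H j (x + a)| ≤ δ := by
  classical
  have h2 : (0 : ℝ) < δ / 2 := by positivity
  choose A hAfin hA using fun j => hnet j (δ / 2) h2
  choose c hcA hcp using fun (t : E) (j : ι) => hA j t
  have hrange : (Set.range c).Finite := by
    have hsub : Set.range c ⊆ Set.pi Set.univ fun j => A j := by
      rintro v ⟨t, rfl⟩ j -
      exact hcA t j
    exact (Set.Finite.pi fun j => hAfin j).subset hsub
  have hex : ∀ v : ι → E, ∃ t' : E, v ∈ Set.range c → c t' = v := by
    intro v
    by_cases h : v ∈ Set.range c
    · obtain ⟨t', ht'⟩ := h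
      exact ⟨t', fun _ => ht'⟩
    · exact ⟨0, fun hh => absurd hh h⟩
  choose rep hrep using hex
  refine ⟨rep '' Set.range c, hrange.image _, fun t => ?_⟩
  refine ⟨rep (c t), ⟨c t, ⟨t, rfl⟩, rfl⟩, fun j x => ?_⟩
  have hr : c (rep (c t)) = c t := hrep (c t) ⟨t, rfl⟩
  have e1 : |H j (x + t) - H j (x + c t j)| ≤ δ / 2 := hcp t j x
  have e2 : |H j (x + rep (c t)) - H j (x + c t j)| ≤ δ / 2 := by
    have := hcp (rep (c t)) j x
    rwa [hr] at this
  have := abs_sub_le (H j (x + t)) (H j (x + c t j)) (H j (x + rep (c t)))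
  have := abs_sub_comm (H j (x + c t j)) (H j (x + rep (c t)))
  linarith

/-- A positive common lower bound for finitely many positive reals, at most 1. -/
lemma exists_pos_forall_le {ι : Type*} [Finite ι] (f : ι → ℝ) (hf : ∀ i, 0 < f i) :
    ∃ η > 0, η ≤ 1 ∧ ∀ i, η ≤ f i := by
  cases isEmpty_or_nonempty ι with
  | inl h => exact ⟨1, one_pos, le_refl 1, fun i => (IsEmpty.false i).elim⟩
  | inr h =>
    have := Fintype.ofFinite ι
    obtain ⟨i₀, -, hmin⟩ := Finset.exists_min_image Finset.univ f
      ⟨Classical.arbitrary ι, Finset.mem_univ _⟩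
    exact ⟨min (f i₀) 1, lt_min (hf i₀) one_pos, min_le_right _ _,
      fun i => (min_le_left _ _).trans (hmin i (Finset.mem_univ i))⟩

end Aux

/-- The coordinate cosine functions are almost periodic. -/
lemma cos_coord_ap {p : ℕ} (k : Fin p) :
    AlmostPeriodic fun x : EuclideanSpace ℝ (Fin p) => Real.cos (2 * Real.pi * x k) := by
  intro ε hε
  refine ⟨1, one_pos, fun c => ?_⟩
  set τ : EuclideanSpace ℝ (Fin p) :=
    c + (((round (c k) : ℤ) : ℝ) - c k) • EuclideanSpace.single k (1 : ℝ) with hτdef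
  have hτk : τ k = ((round (c k) : ℤ) : ℝ) := by
    rw [hτdef, PiLp.add_apply, PiLp.smul_apply, EuclideanSpace.single_apply]
    simp
  have hmem : ∀ x : EuclideanSpace ℝ (Fin p),
      |Real.cos (2 * Real.pi * (x + τ) k) - Real.cos (2 * Real.pi * x k)| < ε := by
    intro x
    have hxk : (x + τ) k = x k + ((round (c k) : ℤ) : ℝ) := by
      rw [PiLp.add_apply, hτk]
    rw [hxk]
    have heq : 2 * Real.pi * (x k + ((round (c k) : ℤ) : ℝ))
        = 2 * Real.pi * x k + ((round (c k) : ℤ) : ℝ) * (2 * Real.pi) := by ring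
    rw [heq, Real.cos_add_int_mul_two_pi]
    simpa using hε
  refine ⟨τ, hmem, ?_⟩
  have hd : dist τ c = |((round (c k) : ℤ) : ℝ) - c k| := by
    rw [hτdef, dist_eq_norm, add_sub_cancel_left, norm_smul, EuclideanSpace.norm_single]
    simp [Real.norm_eq_abs]
  rw [hd, abs_sub_comm]
  have := abs_sub_round (c k)
  linarith

/-- common integer-coordinate ε-almost periods of finitely many
continuous almost periodic functions form a relatively dense set. -/
theorem statement2 {p : ℕ} (F : Fin p → EuclideanSpace ℝ (Fin p) → ℝ)
    (hc : ∀ j, Continuous (F j)) (hap : ∀ j, AlmostPeriodic (F j))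
    (ε : ℝ) (hε : 0 < ε) :
    RelativelyDense {τ : EuclideanSpace ℝ (Fin p) |
      (∀ j : Fin p, ∃ z : ℤ, τ j = (z : ℝ)) ∧
      ∀ j : Fin p, ∀ x, |F j (x + τ) - F j x| < ε} := by
  classical
  -- uniform continuity moduli
  choose ηf hηfpos hηf1 hηf using fun j => ap_uniform (F j) (hc j) (hap j)
    (δ := ε / 3) (by positivity)
  obtain ⟨η, hηpos, hη1, hηle⟩ := exists_pos_forall_le ηf hηfpos
  -- the common tolerance
  set ρ : ℝ := η / (2 * (p + 1)) with hρdef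
  have hρpos : 0 < ρ := by positivity
  set δ' : ℝ := min (ε / 3) (2 * (η / (p + 1)) ^ 2) with hδ'def
  have hδ'pos : 0 < δ' := lt_min (by positivity) (by positivity)
  have hδ'ε : δ' ≤ ε / 3 := min_le_left _ _
  -- the joint family
  set H : (Fin p ⊕ Fin p) → EuclideanSpace ℝ (Fin p) → ℝ :=
    Sum.elim F (fun k x => Real.cos (2 * Real.pi * x k)) with hHdef
  have hnet : ∀ j, ∀ d : ℝ, 0 < d →
      ∃ A : Set (EuclideanSpace ℝ (Fin p)), A.Finite ∧ ∀ t, ∃ a ∈ A, ∀ x, |H j (x + t) - H j (x + a)| ≤ d := by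
    rintro (j | k) d hd
    · exact ap_net (F j) (hc j) (hap j) hd
    · exact ap_net _ (Real.continuous_cos.comp (continuous_const.mul ((continuous_apply k).comp (PiLp.continuous_ofLp 2 _))))
        (cos_coord_ap k) hd
  obtain ⟨A, hAfin, hA⟩ := joint_net H hnet hδ'pos
  -- bound on the net
  obtain ⟨M, hM⟩ := (hAfin.image fun a => ‖a‖).bddAbove
  simp only [upperBounds, Set.mem_image, Set.mem_setOf_eq] at hM
  have hMb : ∀ a ∈ A, ‖a‖ ≤ M := fun a ha => hM ⟨a, ha, rfl⟩
  refine ⟨max M 0 + 2, by positivity, fun c => ?_⟩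
  obtain ⟨a, haA, ha⟩ := hA c
  set σ : EuclideanSpace ℝ (Fin p) := c - a with hσdef
  have hσ : ∀ j x, |H j (x + σ) - H j x| ≤ δ' := by
    intro j x
    have := ha j (x - a)
    have e1 : x - a + c = x + σ := by rw [hσdef]; abel
    have e2 : x - a + a = x := by abel
    rwa [e1, e2] at this
  -- coordinates of σ are near integers
  have hcoord : ∀ k : Fin p, |σ k - ((round (σ k) : ℤ) : ℝ)| ≤ ρ := by
    intro k
    have hcos : |Real.cos (2 * Real.pi * σ k) - 1| ≤ δ' := by
      have := hσ (Sum.inr k) 0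
      simp only [hHdef, Sum.elim_inr, zero_add] at this
      have h0 : (0 : EuclideanSpace ℝ (Fin p)) k = 0 := rfl
      rwa [h0, mul_zero, Real.cos_zero] at this
    set φ : ℝ := σ k - ((round (σ k) : ℤ) : ℝ) with hφdef
    have hsin2 : Real.sin (Real.pi * σ k) ^ 2 ≤ δ' / 2 := by
      have h1 : Real.sin (Real.pi * σ k) ^ 2
          = 1 / 2 - Real.cos (2 * (Real.pi * σ k)) / 2 := Real.sin_sq_eq_half_sub _
      have h2 : 2 * (Real.pi * σ k) = 2 * Real.pi * σ k := by ring
      rw [h1, h2]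
      have := abs_le.mp hcos
      linarith [this.1]
    have hsinφ : Real.sin (Real.pi * σ k) ^ 2 = Real.sin (Real.pi * φ) ^ 2 := by
      have h3 : Real.pi * σ k = Real.pi * φ + (round (σ k) : ℤ) * Real.pi := by
        rw [hφdef]; ring
      have hone : ((-1 : ℝ) ^ round (σ k)) ^ 2 = 1 := by
        rw [← zpow_natCast ((-1 : ℝ) ^ round (σ k)) 2, ← zpow_mul]
        exact Even.neg_one_zpow ⟨round (σ k), by ring⟩
      rw [h3, Real.sin_add_int_mul_pi, mul_pow, hone, one_mul]
    have hφhalf : |φ| ≤ 1 / 2 := abs_sub_round (σ k)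
    have hpiφ : |Real.pi * φ| = Real.pi * |φ| := by
      rw [abs_mul, abs_of_pos Real.pi_pos]
    have hjordan : 2 / Real.pi * |Real.pi * φ| ≤ |Real.sin (Real.pi * φ)| := by
      apply Real.mul_abs_le_abs_sin
      rw [hpiφ]
      nlinarith [Real.pi_pos]
    have habs : 2 * |φ| ≤ |Real.sin (Real.pi * φ)| := by
      have h5 : 2 / Real.pi * (Real.pi * |φ|) = 2 * |φ| := by
        field_simp
      calc 2 * |φ| = 2 / Real.pi * (Real.pi * |φ|) := h5.symm
        _ = 2 / Real.pi * |Real.pi * φ| := by rw [hpiφ]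
        _ ≤ |Real.sin (Real.pi * φ)| := hjordan
    have hsq : (2 * |φ|) ^ 2 ≤ δ' / 2 := by
      have h4 : |Real.sin (Real.pi * φ)| ^ 2 = Real.sin (Real.pi * φ) ^ 2 := sq_abs _
      nlinarith [abs_nonneg (Real.sin (Real.pi * φ)), abs_nonneg φ, hsinφ, hsin2]
    have hδ'2 : δ' / 2 ≤ (η / (p + 1)) ^ 2 := by
      have := min_le_right (ε / 3) (2 * (η / (p + 1)) ^ 2)
      rw [← hδ'def] at this
      linarith
    have : (2 * |φ|) ^ 2 ≤ (η / (p + 1)) ^ 2 := hsq.trans hδ'2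
    have h2φ : 2 * |φ| ≤ η / (p + 1) := by
      nlinarith [abs_nonneg φ, div_pos hηpos (show (0:ℝ) < p + 1 by positivity)]
    have hhalf : 2 * (η / (2 * ((p : ℝ) + 1))) = η / ((p : ℝ) + 1) := by
      rw [← mul_div_assoc, mul_div_mul_left]
      exact two_ne_zero
    rw [hρdef]
    linarith
  -- the integer translation
  set τ : EuclideanSpace ℝ (Fin p) := (WithLp.equiv 2 (Fin p → ℝ)).symm fun k => ((round (σ k) : ℤ) : ℝ) with hτdef
  have hτapp : ∀ k, τ k = ((round (σ k) : ℤ) : ℝ) := fun k => by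
    rw [hτdef]; rfl
  have hτσ : dist τ σ ≤ η := by
    rw [EuclideanSpace.dist_eq]
    have hsum : (∑ k, dist (τ k) (σ k) ^ 2) ≤ (((p : ℝ) + 1) * ρ) ^ 2 := by
      have hterm : ∀ k ∈ Finset.univ, dist (τ k) (σ k) ^ 2 ≤ ρ ^ 2 := by
        intro k _
        have h1 : |σ k - ((round (σ k) : ℤ) : ℝ)| ≤ ρ := hcoord k
        have h2 : dist (τ k) (σ k) = |σ k - ((round (σ k) : ℤ) : ℝ)| := by
          rw [Real.dist_eq, hτapp k, abs_sub_comm]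
        rw [h2]
        exact pow_le_pow_left₀ (abs_nonneg _) h1 2
      calc (∑ k, dist (τ k) (σ k) ^ 2) ≤ ∑ _k : Fin p, ρ ^ 2 :=
            Finset.sum_le_sum hterm
        _ = (p : ℝ) * ρ ^ 2 := by rw [Finset.sum_const]; simp [mul_comm]
        _ ≤ (((p : ℝ) + 1) * ρ) ^ 2 := by nlinarith [sq_nonneg ρ, hρpos.le]
    calc Real.sqrt (∑ k, dist (τ k) (σ k) ^ 2) ≤ Real.sqrt ((((p : ℝ) + 1) * ρ) ^ 2) :=
          Real.sqrt_le_sqrt hsum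
      _ = ((p : ℝ) + 1) * ρ := Real.sqrt_sq (by positivity)
      _ = η / 2 := by rw [hρdef]; field_simp
      _ ≤ η := by linarith
  refine ⟨τ, ⟨fun k => ⟨round (σ k), hτapp k⟩, fun j x => ?_⟩, ?_⟩
  · -- almost period property
    have e1 : |F j (x + τ) - F j (x + σ)| ≤ ε / 3 := by
      apply hηf j
      rw [dist_add_left]
      exact hτσ.trans ((hηle j))
    have e2 : |F j (x + σ) - F j x| ≤ δ' := hσ (Sum.inl j) x
    have := abs_sub_le (F j (x + τ)) (F j (x + σ)) (F j x)
    have hε3 : δ' ≤ ε / 3 := hδ'ε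
    linarith
  · -- distance bound
    have h1 : dist σ c = ‖a‖ := by
      rw [hσdef, dist_eq_norm]
      simp
    calc dist τ c ≤ dist τ σ + dist σ c := dist_triangle _ _ _
      _ ≤ η + M := by
          rw [h1]; exact add_le_add hτσ (hMb a haA)
      _ ≤ 1 + max M 0 := add_le_add hη1 (le_max_left _ _)
      _ < max M 0 + 2 := by linarith
end

section
/- Let F(x) = (1/5)(sin x_1, …, sin x_p) and A = {k + F(k) : k ∈ ℤ^p}. Then A has no nonzero period: there is no τ ∈ ℝ^p \ {0} such that A + τ = A. -/
open Metric Set MeasureTheory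

/-- An integer whose sine vanishes is zero (since `π` is irrational). -/
lemma int_sin_eq_zero {n : ℤ} (h : Real.sin n = 0) : n = 0 := by
  obtain ⟨m, hm⟩ := Real.sin_eq_zero_iff.mp h
  rcases eq_or_ne m 0 with h0 | h0
  · subst h0
    simp at hm
    exact_mod_cast hm.symm
  · exfalso
    apply irrational_pi
    refine ⟨(n : ℚ) / (m : ℚ), ?_⟩
    have hm' : (m : ℝ) ≠ 0 := Int.cast_ne_zero.mpr h0
    push_cast
    field_simp
    linarith [hm]

/-- Key arithmetic lemma: if `g a + g b = g c` for `g x = x + sin x / 5` on integers,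
then `c = a + b`. -/
lemma key_lemma {a b c : ℤ}
    (h : (a : ℝ) + (1 / 5) * Real.sin a + ((b : ℝ) + (1 / 5) * Real.sin b)
        = (c : ℝ) + (1 / 5) * Real.sin c) : c = a + b := by
  have habs : |((c - a - b : ℤ) : ℝ)| < 1 := by
    have h1 := Real.neg_one_le_sin (a : ℝ)
    have h2 := Real.sin_le_one (a : ℝ)
    have h3 := Real.neg_one_le_sin (b : ℝ)
    have h4 := Real.sin_le_one (b : ℝ)
    have h5 := Real.neg_one_le_sin (c : ℝ)
    have h6 := Real.sin_le_one (c : ℝ)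
    rw [abs_lt]
    push_cast
    constructor <;> nlinarith
  have h7 : |c - a - b| < 1 := by exact_mod_cast habs
  have := abs_lt.mp h7
  omega

/-- the almost periodic set `A = {k + (1/5)(sin k₁, …, sin k_p) : k ∈ ℤ^p}`
has no nonzero period. -/
theorem statement6 {p : ℕ} (τ : EuclideanSpace ℝ (Fin p)) (hτ : τ ≠ 0) :
    ¬ ((fun a => a + τ) '' {y : EuclideanSpace ℝ (Fin p) |
          ∃ k : Fin p → ℤ, ∀ j : Fin p, y j = (k j : ℝ) + (1 / 5) * Real.sin (k j)} =
        {y : EuclideanSpace ℝ (Fin p) |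
          ∃ k : Fin p → ℤ, ∀ j : Fin p, y j = (k j : ℝ) + (1 / 5) * Real.sin (k j)}) := by
  intro h
  set A : Set (EuclideanSpace ℝ (Fin p)) :=
    {y : EuclideanSpace ℝ (Fin p) |
      ∃ k : Fin p → ℤ, ∀ j : Fin p, y j = (k j : ℝ) + (1 / 5) * Real.sin (k j)} with hA
  -- 0 ∈ A
  have h0 : (0 : EuclideanSpace ℝ (Fin p)) ∈ A := ⟨0, by intro j; simp⟩
  -- τ ∈ A
  have hτA : τ ∈ A := by
    rw [← h]
    exact ⟨0, h0, by simp⟩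
  obtain ⟨m, hm⟩ := hτA
  -- for each integer vector k, k + F k + τ ∈ A
  have hstep : ∀ k : Fin p → ℤ, ∀ j : Fin p, ∃ c : ℤ,
      ((k j : ℝ) + (1 / 5) * Real.sin (k j)) + τ j = (c : ℝ) + (1 / 5) * Real.sin c := by
    intro k j
    set y : EuclideanSpace ℝ (Fin p) :=
      WithLp.toLp 2 (fun j => (k j : ℝ) + (1 / 5) * Real.sin (k j) : Fin p → ℝ) with hy
    have hyA : y ∈ A := ⟨k, fun j => rfl⟩
    have : y + τ ∈ A := by
      rw [← h]; exact ⟨y, hyA, rfl⟩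
    obtain ⟨c, hc⟩ := this
    exact ⟨c j, by simpa [hy, PiLp.add_apply] using hc j⟩
  -- sine relation at each coordinate
  have hsin : ∀ (j : Fin p) (n : ℤ),
      Real.sin n + Real.sin (m j) = Real.sin ((n + m j : ℤ) : ℝ) := by
    intro j n
    obtain ⟨c, hc⟩ := hstep (fun _ => n) j
    rw [hm j] at hc
    have hcnm : c = n + m j := key_lemma hc
    subst hcnm
    push_cast at hc ⊢
    linarith
  -- some coordinate of τ is nonzero
  have : ∃ j, τ j ≠ 0 := by
    by_contra hall
    push_neg at hall
    exact hτ (by ext i; simpa using hall i)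
  obtain ⟨j, hj⟩ := this
  -- sin (m j) = 0
  have h1 := hsin j 1
  have h2 := hsin j (-1)
  push_cast at h1 h2
  rw [Real.sin_add] at h1
  rw [show (-1 : ℝ) + (m j : ℝ) = (m j : ℝ) - 1 by ring, Real.sin_sub,
    Real.sin_neg] at h2
  have hs0 : Real.sin (m j) = 0 := by nlinarith [Real.cos_one_le]
  have hm0 : m j = 0 := int_sin_eq_zero hs0
  apply hj
  rw [hm j, hm0]
  simp
end

section
/- Let A be a multiset in ℝ (a nondecreasing doubly infinite sequence (a_k)_{k∈ℤ}) such that for every ε > 0 its set of ε-almost periods is relatively dense in ℝ, and suppose card(A ∩ (−L−1, L+1)) = M where every interval of length L > 2 contains a 1-almost period. Then card(A ∩ I) ≤ M for every interval I of length L. -/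
open Metric Set MeasureTheory

/-- `τ` is an `ε`-almost period of the multiset `(a_k)_{k ∈ ℤ}` in the bijective sense. -/
def IsAlmostPeriodOf (a : ℤ → ℝ) (ε τ : ℝ) : Prop :=
  ∃ σ : ℤ ≃ ℤ, ∀ k : ℤ, |a k + τ - a (σ k)| < ε

private lemma int_unbdd {U : Set ℤ} (h : U.Infinite) :
    (∀ n : ℤ, ∃ k ∈ U, k ≤ n) ∨ (∀ n : ℤ, ∃ k ∈ U, n ≤ k) := by
  by_contra hc
  push_neg at hc
  obtain ⟨⟨n1, h1⟩, n2, h2⟩ := hc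
  exact h ((Set.finite_Icc n1 n2).subset fun k hk => ⟨(h1 k hk).le, (h2 k hk).le⟩)

private lemma window (a : ℤ → ℝ) (L : ℝ)
    (hper : ∀ x : ℝ, ∃ κ ∈ Set.Icc x (x + L), IsAlmostPeriodOf a 1 κ)
    {U : Set ℤ} (hU : U.Infinite)
    (hUa : ∀ k ∈ U, a k ∈ Set.Ioo (-L - 1) (L + 1)) (c : ℝ) :
    {j : ℤ | a j ∈ Set.Ioo (c - L - 2) (c + 2*L + 2)}.Infinite := by
  obtain ⟨κ, hκ, σ, hσ⟩ := hper c
  apply Set.Infinite.mono _ (hU.image (σ.injective.injOn))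
  rintro j ⟨k, hk, rfl⟩
  have h1 := hσ k
  rw [abs_lt] at h1
  obtain ⟨ha1, ha2⟩ := hUa k hk
  obtain ⟨hb1, hb2⟩ := hκ
  simp only [Set.mem_setOf_eq, Set.mem_Ioo]
  constructor <;> linarith [h1.1, h1.2]

private lemma T_finite (a : ℤ → ℝ) (mono : Monotone a) (L : ℝ) (hL : 2 < L)
    (hper : ∀ x : ℝ, ∃ κ ∈ Set.Icc x (x + L), IsAlmostPeriodOf a 1 κ) :
    {k : ℤ | a k ∈ Set.Ioo (-L - 1) (L + 1)}.Finite := by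
  by_contra hinf
  rw [← Set.not_infinite, not_not] at hinf
  obtain ⟨k₀, hk₀⟩ := hinf.nonempty
  simp only [Set.mem_setOf_eq, Set.mem_Ioo] at hk₀
  have key : ∀ c : ℝ, {j : ℤ | a j ∈ Set.Ioo (c - L - 2) (c + 2*L + 2)}.Infinite :=
    fun c => window a L hper hinf (fun k hk => hk) c
  have bound : ∀ j : ℤ, a j < 4*L + 5 := by
    rcases int_unbdd (key (2*L + 3)) with h | h
    · obtain ⟨k, hk, hkle⟩ := h k₀
      simp only [Set.mem_setOf_eq, Set.mem_Ioo] at hk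
      have := mono hkle
      exfalso; linarith [hk.1, hk₀.2]
    · intro j
      obtain ⟨k, hk, hkle⟩ := h j
      simp only [Set.mem_setOf_eq, Set.mem_Ioo] at hk
      have := mono hkle
      linarith [hk.2]
  obtain ⟨j, hj⟩ := (key (5*L + 7)).nonempty
  simp only [Set.mem_setOf_eq, Set.mem_Ioo] at hj
  linarith [hj.1, bound j]

/-- if every interval of length `L > 2` contains a `1`-almost period and
`M = card(A ∩ (−L−1, L+1))`, then `card(A ∩ I) ≤ M` for every interval `I` of length `L`. -/
theorem statement8 (a : ℤ → ℝ) (mono : Monotone a)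
    (hap : ∀ ε : ℝ, 0 < ε → RelativelyDense {τ : ℝ | IsAlmostPeriodOf a ε τ})
    (L : ℝ) (hL : 2 < L)
    (hper : ∀ x : ℝ, ∃ κ ∈ Set.Icc x (x + L), IsAlmostPeriodOf a 1 κ)
    (M : ℕ) (hM : M = Nat.card {k : ℤ | a k ∈ Set.Ioo (-L - 1) (L + 1)}) :
    ∀ x : ℝ, Nat.card {k : ℤ | a k ∈ Set.Icc x (x + L)} ≤ M := by
  intro x
  obtain ⟨κ, hκ, σ, hσ⟩ := hper (-x - L)
  obtain ⟨hb1, hb2⟩ := hκ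
  have hT := T_finite a mono L hL hper
  haveI := hT.to_subtype
  subst hM
  have hmem : ∀ k : {k : ℤ | a k ∈ Set.Icc x (x + L)},
      a (σ k.1) ∈ Set.Ioo (-L - 1) (L + 1) := by
    rintro ⟨k, hk⟩
    simp only [Set.mem_setOf_eq, Set.mem_Icc] at hk
    have h1 := hσ k
    rw [abs_lt] at h1
    constructor <;> simp only [] <;> linarith [h1.1, h1.2, hk.1, hk.2]
  apply Nat.card_le_card_of_injective
    (fun k => (⟨σ k.1, hmem k⟩ : {k : ℤ | a k ∈ Set.Ioo (-L - 1) (L + 1)}))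
  intro k1 k2 h
  exact Subtype.ext (σ.injective (congrArg Subtype.val h))
end

section
/- Let A = (a_k)_{k∈ℤ} be a nondecreasing almost periodic multiple discrete set in ℝ with density 1. Then there exists M < ∞ such that |card(A ∩ (x, x+h]) − h| ≤ 4M for all x ∈ ℝ and all h > 0. -/
open Metric Set MeasureTheory

section Aux
variable {a : ℤ → ℝ} {K : ℝ → ℤ} (hK : ∀ (k : ℤ) (t : ℝ), a k ≤ t ↔ k ≤ K t)

include hK

lemma K_mono' : Monotone K := by
  intro s t hst
  exact (hK (K s) t).1 (le_trans ((hK (K s) s).2 le_rfl) hst)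

lemma count_Ioc_eq (x y : ℝ) :
    {k : ℤ | a k ∈ Set.Ioc x y} = ↑(Finset.Ioc (K x) (K y)) := by
  ext k
  simp only [Set.mem_setOf_eq, Set.mem_Ioc, Finset.coe_Ioc, Set.mem_Ioc]
  constructor
  · rintro ⟨h1, h2⟩
    refine ⟨?_, (hK k y).1 h2⟩
    by_contra hc
    exact absurd ((hK k x).2 (not_lt.1 hc)) (not_le.2 h1)
  · rintro ⟨h1, h2⟩
    refine ⟨?_, (hK k y).2 h2⟩
    by_contra hc
    exact absurd ((hK k x).1 (not_lt.1 hc)) (not_le.2 h1)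

lemma claimA {τ : ℝ} (hτ : IsAlmostPeriodOf a 1 τ) {u v : ℝ} (huv : u ≤ v) :
    (K v : ℤ) - K u ≤ K (v + τ + 1) - K (u + τ - 1) := by
  obtain ⟨σ, hσ⟩ := hτ
  have hcard : (Finset.Ioc (K u) (K v)).card ≤
      (Finset.Ioc (K (u + τ - 1)) (K (v + τ + 1))).card := by
    apply Finset.card_le_card_of_injOn σ
    · intro k hk
      rw [Finset.mem_coe, Finset.mem_Ioc] at hk ⊢
      have h1 : ¬ a k ≤ u := fun h => absurd ((hK k u).1 h) (not_le.2 hk.1)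
      have h2 : a k ≤ v := (hK k v).2 hk.2
      have hb := abs_lt.1 (hσ k)
      push_neg at h1
      constructor
      · by_contra hc
        have := (hK (σ k) (u + τ - 1)).2 (not_lt.1 hc)
        linarith [hb.1]
      · exact (hK (σ k) (v + τ + 1)).1 (by linarith [hb.2])
    · exact fun x _ y _ h => σ.injective h
  rw [Int.card_Ioc, Int.card_Ioc] at hcard
  have h1 : (0:ℤ) ≤ K v - K u := sub_nonneg.2 (K_mono' hK huv)
  have h2 : (0:ℤ) ≤ K (v + τ + 1) - K (u + τ - 1) :=
    sub_nonneg.2 (K_mono' hK (by linarith))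
  omega

lemma claimB {τ : ℝ} (hτ : IsAlmostPeriodOf a 1 τ) {u v : ℝ} (huv : u + 2 ≤ v) :
    (K (v + τ - 1) : ℤ) - K (u + τ + 1) ≤ K v - K u := by
  obtain ⟨σ, hσ⟩ := hτ
  have hcard : (Finset.Ioc (K (u + τ + 1)) (K (v + τ - 1))).card ≤
      (Finset.Ioc (K u) (K v)).card := by
    apply Finset.card_le_card_of_injOn σ.symm
    · intro k hk
      rw [Finset.mem_coe, Finset.mem_Ioc] at hk ⊢
      have h1 : ¬ a k ≤ u + τ + 1 := fun h => absurd ((hK k _).1 h) (not_le.2 hk.1)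
      have h2 : a k ≤ v + τ - 1 := (hK k _).2 hk.2
      push_neg at h1
      have hb := abs_lt.1 (hσ (σ.symm k))
      rw [σ.apply_symm_apply] at hb
      constructor
      · by_contra hc
        have := (hK (σ.symm k) u).2 (not_lt.1 hc)
        linarith [hb.2]
      · exact (hK (σ.symm k) v).1 (by linarith [hb.1])
    · exact fun x _ y _ h => σ.symm.injective h
  rw [Int.card_Ioc, Int.card_Ioc] at hcard
  have h1 : (0:ℤ) ≤ K v - K u := sub_nonneg.2 (K_mono' hK (by linarith))
  have h2 : (0:ℤ) ≤ K (v + τ - 1) - K (u + τ + 1) :=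
    sub_nonneg.2 (K_mono' hK (by linarith))
  omega

end Aux

set_option maxHeartbeats 2000000 in
/-- a nondecreasing almost periodic multiple discrete set in ℝ with density `1`
satisfies `|card(A ∩ (x, x+h]) − h| ≤ 4M` for some `M` and all `x ∈ ℝ`, `h > 0`. -/
theorem statement10 (a : ℤ → ℝ) (mono : Monotone a)
    (hap : ∀ ε : ℝ, 0 < ε → RelativelyDense {τ : ℝ | IsAlmostPeriodOf a ε τ})
    (hD : ∀ ε : ℝ, 0 < ε → ∃ R₀ : ℝ, 0 < R₀ ∧ ∀ R : ℝ, R₀ ≤ R → ∀ x : ℝ,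
      |(Nat.card {k : ℤ | a k ∈ Set.Ioo (x - R) (x + R)} : ℝ) / (2 * R) - 1| < ε) :
    ∃ M : ℝ, ∀ x : ℝ, ∀ h : ℝ, 0 < h →
      |(Nat.card {k : ℤ | a k ∈ Set.Ioc x (x + h)} : ℝ) - h| ≤ 4 * M := by
  obtain ⟨R, hR, hcov⟩ := hap 1 one_pos
  choose τf hτap hτd using hcov
  have hτap' : ∀ c : ℝ, IsAlmostPeriodOf a 1 (τf c) := hτap
  -- finiteness of counts in bounded windows
  obtain ⟨R₅, hR₅, hD₅⟩ := hD (1/2) (by norm_num)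
  have hfin : ∀ u v : ℝ, {k : ℤ | a k ∈ Set.Ioo u v}.Finite := by
    intro u v
    set Rb := max R₅ ((v-u)/2 + 1) with hRbdef
    have hRb₅ : R₅ ≤ Rb := le_max_left _ _
    have hRb2 : (v-u)/2 + 1 ≤ Rb := le_max_right _ _
    have hsub : {k : ℤ | a k ∈ Set.Ioo u v} ⊆
        {k : ℤ | a k ∈ Set.Ioo ((u+v)/2 - Rb) ((u+v)/2 + Rb)} := by
      intro k hk
      simp only [Set.mem_setOf_eq, Set.mem_Ioo] at *
      exact ⟨by linarith [hk.1], by linarith [hk.2]⟩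
    refine Set.Finite.subset ?_ hsub
    by_contra hinf
    have hInf : {k : ℤ | a k ∈ Set.Ioo ((u+v)/2 - Rb) ((u+v)/2 + Rb)}.Infinite := hinf
    have h0 : Nat.card {k : ℤ | a k ∈ Set.Ioo ((u+v)/2 - Rb) ((u+v)/2 + Rb)} = 0 := by
      have := hInf.to_subtype
      exact Nat.card_eq_zero_of_infinite
    have := hD₅ Rb hRb₅ ((u+v)/2)
    rw [h0] at this
    have hRbpos : 0 < Rb := lt_of_lt_of_le hR₅ hRb₅
    rw [Nat.cast_zero, zero_div] at this
    norm_num at this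
  -- a is unbounded above and below
  have hup : ∀ t : ℝ, ∃ k : ℤ, t < a k := by
    intro t
    by_contra hc
    push_neg at hc
    have hsub : (Set.Ici (0:ℤ)) ⊆
        {k : ℤ | a k ∈ Set.Ioo (a 0 - (|t - a 0| + 1)) (a 0 + (|t - a 0| + 1))} := by
      intro k hk
      simp only [Set.mem_Ici] at hk
      simp only [Set.mem_setOf_eq, Set.mem_Ioo]
      have h1 : a 0 ≤ a k := mono hk
      have h2 := hc k
      have h3 := le_abs_self (t - a 0)
      have h4 := abs_nonneg (t - a 0)
      exact ⟨by linarith, by linarith⟩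
    exact (Set.Ici_infinite 0) ((hfin _ _).subset hsub)
  have hdn : ∀ t : ℝ, ∃ k : ℤ, a k ≤ t := by
    intro t
    by_contra hc
    push_neg at hc
    have hsub : (Set.Iic (0:ℤ)) ⊆
        {k : ℤ | a k ∈ Set.Ioo (a 0 - (|a 0 - t| + 1)) (a 0 + (|a 0 - t| + 1))} := by
      intro k hk
      simp only [Set.mem_Iic] at hk
      simp only [Set.mem_setOf_eq, Set.mem_Ioo]
      have h1 : a k ≤ a 0 := mono hk
      have h2 := hc k
      have h3 := le_abs_self (a 0 - t)
      have h4 := abs_nonneg (a 0 - t)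
      exact ⟨by linarith, by linarith⟩
    exact (Set.Iic_infinite 0) ((hfin _ _).subset hsub)
  -- the counting function K
  have hKex : ∀ t : ℝ, ∃ m : ℤ, a m ≤ t ∧ ∀ z : ℤ, a z ≤ t → z ≤ m := by
    intro t
    obtain ⟨j, hj⟩ := hup t
    obtain ⟨i, hi⟩ := hdn t
    refine Int.exists_greatest_of_bdd ⟨j, fun z hz => ?_⟩ ⟨i, hi⟩
    by_contra hzj
    push_neg at hzj
    exact absurd hj (not_lt.2 (le_trans (mono hzj.le) hz))
  choose K hK1 hK2 using hKex
  have hK : ∀ (k : ℤ) (t : ℝ), a k ≤ t ↔ k ≤ K t :=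
    fun k t => ⟨fun h => hK2 t k h, fun h => le_trans (mono h) (hK1 t)⟩
  -- density estimates in terms of K
  have hDK : ∀ ε' : ℝ, 0 < ε' → ∃ R₀ : ℝ, 0 < R₀ ∧ ∀ u v : ℝ, u + 2*R₀ ≤ v →
      ((K v : ℝ) - K u < (v - u + 2)*(1+ε') ∧ (v - u)*(1-ε') < (K v : ℝ) - K u) := by
    intro ε' hε'
    obtain ⟨R₀, hR₀, hd⟩ := hD ε' hε'
    refine ⟨R₀, hR₀, fun u v huv => ?_⟩
    have huv' : u ≤ v := by linarith
    have hKnnZ : (0:ℤ) ≤ K v - K u := sub_nonneg.2 (K_mono' hK huv')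
    have hcast : ((K v - K u).toNat : ℝ) = (K v : ℝ) - K u := by
      have := Int.toNat_of_nonneg hKnnZ
      exact_mod_cast congrArg (Int.cast : ℤ → ℝ) this
    constructor
    · have h1 := hd ((v-u)/2 + 1) (by linarith) ((u+v)/2)
      have e1 : (u+v)/2 - ((v-u)/2+1) = u - 1 := by ring
      have e2 : (u+v)/2 + ((v-u)/2+1) = v + 1 := by ring
      rw [e1, e2] at h1
      have hsub : ↑(Finset.Ioc (K u) (K v)) ⊆ {k : ℤ | a k ∈ Set.Ioo (u-1) (v+1)} := by
        intro k hk
        simp only [Finset.coe_Ioc, Set.mem_Ioc] at hk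
        simp only [Set.mem_setOf_eq, Set.mem_Ioo]
        have h2 : a k ≤ v := (hK k v).2 hk.2
        have h3 : ¬ a k ≤ u := fun hh => absurd ((hK k u).1 hh) (not_le.2 hk.1)
        push_neg at h3
        exact ⟨by linarith, by linarith⟩
      have hcard : ((K v - K u).toNat : ℝ) ≤
          (Nat.card {k : ℤ | a k ∈ Set.Ioo (u-1) (v+1)} : ℝ) := by
        have := Nat.card_mono (hfin (u-1) (v+1)) hsub
        rw [Nat.card_coe_set_eq, Set.ncard_coe_finset, Int.card_Ioc] at this
        exact_mod_cast this
      rw [hcast] at hcard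
      have hpos : (0:ℝ) < v - u + 2 := by linarith
      have e3 : 2*((v-u)/2+1) = v - u + 2 := by ring
      rw [e3] at h1
      have h4 := (abs_lt.1 h1).2
      have h5 : (Nat.card {k : ℤ | a k ∈ Set.Ioo (u-1) (v+1)} : ℝ) / (v-u+2) < 1 + ε' := by
        linarith
      have h6 := (div_lt_iff₀ hpos).1 h5
      have e4 : (1+ε')*(v-u+2) = (v-u+2)*(1+ε') := by ring
      linarith
    · have h1 := hd ((v-u)/2) (by linarith) ((u+v)/2)
      have e1 : (u+v)/2 - ((v-u)/2) = u := by ring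
      have e2 : (u+v)/2 + ((v-u)/2) = v := by ring
      rw [e1, e2] at h1
      have hsub : {k : ℤ | a k ∈ Set.Ioo u v} ⊆ ↑(Finset.Ioc (K u) (K v)) := by
        intro k hk
        simp only [Set.mem_setOf_eq, Set.mem_Ioo] at hk
        simp only [Finset.coe_Ioc, Set.mem_Ioc]
        refine ⟨?_, (hK k v).1 hk.2.le⟩
        by_contra hc
        exact absurd ((hK k u).2 (not_lt.1 hc)) (not_le.2 hk.1)
      have hcard : (Nat.card {k : ℤ | a k ∈ Set.Ioo u v} : ℝ) ≤ (K v : ℝ) - K u := by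
        have hthis := Nat.card_mono (Finset.finite_toSet _) hsub
        have hfc : Nat.card ↑(↑(Finset.Ioc (K u) (K v)) : Set ℤ) = (K v - K u).toNat := by
          rw [Nat.card_coe_set_eq, Set.ncard_coe_finset, Int.card_Ioc]
        rw [hfc] at hthis
        rw [← hcast]
        exact_mod_cast hthis
      have hpos : (0:ℝ) < v - u := by linarith
      have e3 : 2*((v-u)/2) = v - u := by ring
      rw [e3] at h1
      have h4 := (abs_lt.1 h1).1
      have h5 : 1 - ε' < (Nat.card {k : ℤ | a k ∈ Set.Ioo u v} : ℝ) / (v-u) := by linarith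
      have h6 := (lt_div_iff₀ hpos).1 h5
      have e4 : (1-ε')*(v-u) = (v-u)*(1-ε') := by ring
      linarith
  have hTd : ∀ r : ℝ, |τf r - r| < R := fun r => by simpa [Real.dist_eq] using hτd r
  -- UPPER BOUND
  have hUB : ∀ u v : ℝ, u ≤ v → (K v : ℝ) - K u ≤ (v - u) + (2*R + 4) := by
    intro u v huv
    set c : ℝ := (K v : ℝ) - K u with hc
    by_cases hcpos : c ≤ 0
    · linarith
    push_neg at hcpos
    set hh : ℝ := v - u with hhh
    have hh0 : 0 ≤ hh := by linarith
    set L : ℝ := hh + 2 + 2*R with hLdef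
    have hL2 : 2 ≤ L := by rw [hLdef]; linarith
    have hLpos : 0 < L := by linarith
    set ε' : ℝ := 1/(2*L) with hε'def
    have hε'pos : 0 < ε' := by rw [hε'def]; positivity
    have hε'le : ε' ≤ 1 := by
      rw [hε'def, div_le_one (by linarith)]; linarith
    obtain ⟨R₀, hR₀, hdk⟩ := hDK ε' hε'pos
    set E : ℝ := hh + 2*R + 4 with hEdef
    have hEpos : 0 < E := by rw [hEdef]; linarith
    obtain ⟨n₀, hn₀⟩ := exists_nat_ge (max (R₀ + R) (2*E))
    set n : ℕ := n₀ + 1 with hndef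
    have hnn₀ : ((n₀:ℝ)) ≤ (n:ℝ) - 0 := by
      rw [hndef]; push_cast; linarith
    have hn1 : (1:ℝ) ≤ (n:ℝ) := by rw [hndef]; push_cast; linarith [Nat.cast_nonneg (α := ℝ) n₀]
    have hnR₀ : R₀ + R ≤ (n:ℝ) := le_trans (le_trans (le_max_left _ _) hn₀) (by linarith)
    have hnE : 2*E ≤ (n:ℝ) := le_trans (le_trans (le_max_right _ _) hn₀) (by linarith)
    clear_value c hh L ε' E n
    have hgap : ∀ j : ℝ, v + τf (j*L) + 1 ≤ u + τf ((j+1)*L) - 1 := by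
      intro j
      have h1 := (abs_lt.1 (hTd (j*L))).2
      have h2 := (abs_lt.1 (hTd ((j+1)*L))).1
      have e : (j+1)*L = j*L + L := by ring
      have eL : L = hh + 2 + 2*R := hLdef
      have ehh : hh = v - u := hhh
      linarith
    have key : ∀ m : ℕ, ((m:ℝ)+1) * c ≤
        (K (v + τf ((m:ℝ)*L) + 1) : ℝ) - K (u + τf ((0:ℝ)*L) - 1) := by
      intro m
      induction m with
      | zero =>
        have hA := claimA hK (hτap' ((0:ℝ)*L)) huv
        have hA' : c ≤ (K (v + τf ((0:ℝ)*L) + 1) : ℝ) - K (u + τf ((0:ℝ)*L) - 1) := by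
          rw [hc]; exact_mod_cast hA
        push_cast
        linarith
      | succ m ih =>
        have hA := claimA hK (hτap' (((m:ℝ)+1)*L)) huv
        have hA' : c ≤ (K (v + τf (((m:ℝ)+1)*L) + 1) : ℝ) - K (u + τf (((m:ℝ)+1)*L) - 1) := by
          rw [hc]; exact_mod_cast hA
        have hmid : (K (v + τf ((m:ℝ)*L) + 1) : ℝ) ≤ (K (u + τf (((m:ℝ)+1)*L) - 1) : ℝ) := by
          exact_mod_cast K_mono' hK (hgap (m:ℝ))
        push_cast
        linarith
    have hs1 := (abs_lt.1 (hTd ((n:ℝ)*L))).1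
    have hs2 := (abs_lt.1 (hTd ((n:ℝ)*L))).2
    have ht01 := (abs_lt.1 (hTd ((0:ℝ)*L))).1
    have ht02 := (abs_lt.1 (hTd ((0:ℝ)*L))).2
    have hnL2 : 2*(n:ℝ) ≤ (n:ℝ)*L := by nlinarith
    have hcond : (u + τf ((0:ℝ)*L) - 1) + 2*R₀ ≤ v + τf ((n:ℝ)*L) + 1 := by
      have ehh : hh = v - u := hhh
      linarith
    obtain ⟨hdup, _⟩ := hdk _ _ hcond
    have hkeyn := key n
    have hrhs : ((v + τf ((n:ℝ)*L) + 1) - (u + τf ((0:ℝ)*L) - 1) + 2)*(1+ε') <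
        ((n:ℝ)*L + E)*(1+ε') := by
      apply mul_lt_mul_of_pos_right _ (by linarith)
      have ehh : hh = v - u := hhh
      have eE : E = hh + 2*R + 4 := hEdef
      linarith
    have hε'mul : ((n:ℝ)*L + E)*(1+ε') = (n:ℝ)*L + (n:ℝ)/2 + E + E*ε' := by
      rw [hε'def]; field_simp; ring
    have hEε : E*ε' ≤ E := mul_le_of_le_one_right (le_of_lt hEpos) hε'le
    have hnc : (n:ℝ) * c < (n:ℝ) * (L + 3/2) := by
      have e : (n:ℝ)*(L + 3/2) = (n:ℝ)*L + (n:ℝ)/2 + (n:ℝ) := by ring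
      have hQ := lt_trans (lt_of_le_of_lt hkeyn hdup) hrhs
      rw [hε'mul] at hQ
      linarith
    have hcL : c < L + 3/2 := lt_of_mul_lt_mul_left hnc (by positivity)
    have eL : L = hh + 2 + 2*R := hLdef
    have ehh : hh = v - u := hhh
    linarith
  -- LOWER BOUND
  have hLB : ∀ u v : ℝ, u + 2 ≤ v → (v - u) - ((K v : ℝ) - K u) ≤ 6*R + 8 := by
    intro u v huv2
    have huv : u ≤ v := by linarith
    set c : ℝ := (K v : ℝ) - K u with hc
    have hcub : c ≤ (v - u) + (2*R + 4) := hUB u v huv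
    have hcnn : 0 ≤ c := by
      rw [hc]
      have := K_mono' hK huv
      have : (K u : ℝ) ≤ (K v : ℝ) := by exact_mod_cast this
      linarith
    set hh : ℝ := v - u with hhh
    have hh2 : 2 ≤ hh := by rw [hhh]; linarith
    set L : ℝ := hh + 2 + 2*R with hLdef
    have hLpos : 0 < L := by linarith
    set ε' : ℝ := 1/(2*L) with hε'def
    have hε'pos : 0 < ε' := by rw [hε'def]; positivity
    obtain ⟨R₀, hR₀, hdk⟩ := hDK ε' hε'pos
    obtain ⟨n₀, hn₀⟩ := exists_nat_ge (max (R₀ + R) (4*R + 7))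
    set n : ℕ := n₀ + 1 with hndef
    have hn1 : (1:ℝ) ≤ (n:ℝ) := by rw [hndef]; push_cast; linarith [Nat.cast_nonneg (α := ℝ) n₀]
    have hnn₀ : ((n₀:ℝ)) ≤ (n:ℝ) := by rw [hndef]; push_cast; linarith
    have hnR₀ : R₀ + R ≤ (n:ℝ) := le_trans (le_trans (le_max_left _ _) hn₀) hnn₀
    have hnY : 4*R + 7 ≤ (n:ℝ) := le_trans (le_trans (le_max_right _ _) hn₀) hnn₀
    have hgap : ∀ j : ℝ, v + τf (j*L) + 1 ≤ u + τf ((j+1)*L) - 1 := by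
      intro j
      have h1 := (abs_lt.1 (hTd (j*L))).2
      have h2 := (abs_lt.1 (hTd ((j+1)*L))).1
      have e : (j+1)*L = j*L + L := by ring
      have eL : L = hh + 2 + 2*R := hLdef
      have ehh : hh = v - u := hhh
      linarith
    set G : ℝ := 6*R + 8 with hGdef
    clear_value c hh L ε' n G
    have hgapK : ∀ j : ℝ, (K (u + τf ((j+1)*L) + 1) : ℝ) - K (v + τf (j*L) - 1) ≤ G := by
      intro j
      have h1 := (abs_lt.1 (hTd (j*L))).1
      have h2 := (abs_lt.1 (hTd ((j+1)*L))).2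
      have hord : v + τf (j*L) - 1 ≤ u + τf ((j+1)*L) + 1 := by linarith [hgap j]
      have hub := hUB (v + τf (j*L) - 1) (u + τf ((j+1)*L) + 1) hord
      have e : (j+1)*L = j*L + L := by ring
      have eL : L = hh + 2 + 2*R := hLdef
      have ehh : hh = v - u := hhh
      have eG : G = 6*R + 8 := hGdef
      linarith
    have key2 : ∀ m : ℕ, (K (v + τf ((m:ℝ)*L) - 1) : ℝ) - K (u + τf ((0:ℝ)*L) + 1) ≤
        ((m:ℝ)+1)*c + (m:ℝ)*G := by
      intro m
      induction m with
      | zero =>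
        have hB := claimB hK (hτap' ((0:ℝ)*L)) huv2
        have hB' : (K (v + τf ((0:ℝ)*L) - 1) : ℝ) - K (u + τf ((0:ℝ)*L) + 1) ≤ c := by
          rw [hc]; exact_mod_cast hB
        push_cast
        linarith
      | succ m ih =>
        have hB := claimB hK (hτap' (((m:ℝ)+1)*L)) huv2
        have hB' : (K (v + τf (((m:ℝ)+1)*L) - 1) : ℝ) - K (u + τf (((m:ℝ)+1)*L) + 1) ≤ c := by
          rw [hc]; exact_mod_cast hB
        have hg := hgapK (m:ℝ)
        push_cast
        linarith
    have hs1 := (abs_lt.1 (hTd ((n:ℝ)*L))).1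
    have hs2 := (abs_lt.1 (hTd ((n:ℝ)*L))).2
    have ht01 := (abs_lt.1 (hTd ((0:ℝ)*L))).1
    have ht02 := (abs_lt.1 (hTd ((0:ℝ)*L))).2
    have hnL2 : 2*(n:ℝ) ≤ (n:ℝ)*L := by nlinarith
    have hcond : (u + τf ((0:ℝ)*L) + 1) + 2*R₀ ≤ v + τf ((n:ℝ)*L) - 1 := by
      have ehh : hh = v - u := hhh
      linarith
    obtain ⟨_, hdlo⟩ := hdk _ _ hcond
    have hkey2 := key2 n
    have hXle : (v + τf ((n:ℝ)*L) - 1) - (u + τf ((0:ℝ)*L) + 1) ≤ (n:ℝ)*L + L := by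
      have eL : L = hh + 2 + 2*R := hLdef
      have ehh : hh = v - u := hhh
      linarith
    have hXε : ((v + τf ((n:ℝ)*L) - 1) - (u + τf ((0:ℝ)*L) + 1)) * ε' ≤ ((n:ℝ)+1)/2 := by
      have h1 : ((n:ℝ)*L + L) * ε' = ((n:ℝ)+1)/2 := by
        rw [hε'def]; field_simp
      calc ((v + τf ((n:ℝ)*L) - 1) - (u + τf ((0:ℝ)*L) + 1)) * ε'
          ≤ ((n:ℝ)*L + L) * ε' := mul_le_mul_of_nonneg_right hXle (le_of_lt hε'pos)
        _ = ((n:ℝ)+1)/2 := h1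
    have hexp : ((v + τf ((n:ℝ)*L) - 1) - (u + τf ((0:ℝ)*L) + 1))*(1-ε') =
        ((v + τf ((n:ℝ)*L) - 1) - (u + τf ((0:ℝ)*L) + 1)) -
        ((v + τf ((n:ℝ)*L) - 1) - (u + τf ((0:ℝ)*L) + 1))*ε' := by ring
    rw [hexp] at hdlo
    have hfin2 : (n:ℝ) * ((hh - c) - (4*R + 13/2)) < 4*R + 13/2 := by
      have e : (n:ℝ)*L = (n:ℝ)*hh + 2*(n:ℝ) + 2*((n:ℝ)*R) := by rw [hLdef]; ring
      have eG : (n:ℝ)*G = 6*((n:ℝ)*R) + 8*(n:ℝ) := by rw [hGdef]; ring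
      have egoal : (n:ℝ)*((hh - c) - (4*R + 13/2)) =
          (n:ℝ)*hh - (n:ℝ)*c - 4*((n:ℝ)*R) - (13/2)*(n:ℝ) := by ring
      have ehh : hh = v - u := hhh
      nlinarith [hdlo, hkey2, hXε, hs1, ht02, hcub, e, eG, egoal]
    have hX1 : (hh - c) - (4*R + 13/2) < 1 := by
      by_contra hX
      push_neg at hX
      have h2 := mul_le_mul_of_nonneg_left hX (by linarith : (0:ℝ) ≤ (n:ℝ))
      rw [mul_one] at h2
      linarith
    have ehh : hh = v - u := hhh
    have eG : G = 6*R + 8 := hGdef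
    linarith
  -- conclusion
  refine ⟨(6*R+8)/4, fun x h hh => ?_⟩
  have hxv : x ≤ x + h := by linarith
  have hnnZ : (0:ℤ) ≤ K (x+h) - K x := sub_nonneg.2 (K_mono' hK hxv)
  have hcount : (Nat.card {k : ℤ | a k ∈ Set.Ioc x (x+h)} : ℝ) = (K (x+h) : ℝ) - K x := by
    rw [count_Ioc_eq hK, Nat.card_coe_set_eq, Set.ncard_coe_finset, Int.card_Ioc]
    have := Int.toNat_of_nonneg hnnZ
    exact_mod_cast congrArg (Int.cast : ℤ → ℝ) this
  rw [hcount]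
  have h4M : 4 * ((6*R+8)/4) = 6*R + 8 := by ring
  rw [h4M, abs_le]
  constructor
  · -- lower: -(6R+8) ≤ (K(x+h) - Kx) - h
    by_cases hcase : x + 2 ≤ x + h
    · have := hLB x (x+h) hcase
      have e : (x+h) - x = h := by ring
      rw [e] at this
      linarith
    · push_neg at hcase
      have hcnn : (0:ℝ) ≤ (K (x+h) : ℝ) - K x := by exact_mod_cast hnnZ
      linarith
  · have := hUB x (x+h) hxv
    have e : (x+h) - x = h := by ring
    rw [e] at this
    linarith
end

section
/- For any almost periodic multiple discrete set A in ℝ^p there exists M < ∞ such that card(A ∩ B(x,1)) < M for every x ∈ ℝ^p. -/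
open Metric Set MeasureTheory Classical

/-- an almost periodic multiple discrete set in ℝ^p has uniformly bounded
counts `card(A ∩ B(x,1)) < M` (counting with multiplicity). -/
theorem statement11 {p : ℕ} {ι : Type*} (a : ι → EuclideanSpace ℝ (Fin p)) (m : ι → ℕ)
    (ha : Function.Injective a) (hm : ∀ i, 0 < m i)
    (hdisc : ∀ K : Set (EuclideanSpace ℝ (Fin p)), IsCompact K → (a ⁻¹' K).Finite)
    (hap : ∀ φ : EuclideanSpace ℝ (Fin p) → ℝ, Continuous φ → HasCompactSupport φ →
      AlmostPeriodic fun x => ∑' i, (m i : ℝ) * φ (x + a i)) :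
    ∃ M : ENNReal, M ≠ ⊤ ∧ ∀ x : EuclideanSpace ℝ (Fin p),
      (∑' i, (if a i ∈ Metric.ball x 1 then (m i : ENNReal) else 0)) < M := by
  set φ : EuclideanSpace ℝ (Fin p) → ℝ := fun y => max (2 - ‖y‖) 0 with hφdef
  have hφnonneg : ∀ y, 0 ≤ φ y := fun y => le_max_right _ _
  have hφle : ∀ y, φ y ≤ 2 := fun y =>
    max_le (by nlinarith [norm_nonneg y]) (by norm_num)
  have hφzero : ∀ y : EuclideanSpace ℝ (Fin p), 2 ≤ ‖y‖ → φ y = 0 := fun y hy =>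
    max_eq_right (by linarith)
  have hφone : ∀ y : EuclideanSpace ℝ (Fin p), ‖y‖ < 1 → 1 ≤ φ y := fun y hy =>
    le_max_of_le_left (by linarith)
  have hφcont : Continuous φ := (continuous_const.sub continuous_norm).max continuous_const
  have hφsupp : HasCompactSupport φ := by
    apply HasCompactSupport.intro (isCompact_closedBall (0 : EuclideanSpace ℝ (Fin p)) 2)
    intro y hy
    rw [mem_closedBall, dist_zero_right, not_le] at hy
    exact hφzero y hy.le
  set f : EuclideanSpace ℝ (Fin p) → ℝ := fun x => ∑' i, (m i : ℝ) * φ (x + a i) with hfdef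
  obtain ⟨R, hR, hprop⟩ := hap φ hφcont hφsupp 1 one_pos
  -- tsum over explicit finsets of indices near -x
  have htsum : ∀ x : EuclideanSpace ℝ (Fin p),
      f x = ∑ i ∈ (hdisc (closedBall (-x) 2) (isCompact_closedBall _ _)).toFinset,
        (m i : ℝ) * φ (x + a i) := by
    intro x
    apply tsum_eq_sum
    intro i hi
    rw [Set.Finite.mem_toFinset, mem_preimage, mem_closedBall, not_le] at hi
    have hnorm : ‖x + a i‖ = dist (a i) (-x) := by
      rw [dist_eq_norm, show a i - -x = x + a i by abel]
    rw [hφzero _ (by rw [hnorm]; linarith), mul_zero]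
  have hFfin := hdisc (closedBall (0 : EuclideanSpace ℝ (Fin p)) (R + 2))
    (isCompact_closedBall _ _)
  set D : ℝ := ∑ i ∈ hFfin.toFinset, (m i : ℝ) * 2 with hD
  have hball : ∀ y : EuclideanSpace ℝ (Fin p), ‖y‖ ≤ R → f y ≤ D := by
    intro y hy
    have h1 : f y = ∑ i ∈ hFfin.toFinset, (m i : ℝ) * φ (y + a i) := by
      apply tsum_eq_sum
      intro i hi
      rw [Set.Finite.mem_toFinset, mem_preimage, mem_closedBall, dist_zero_right, not_le] at hi
      have h3 : ‖a i‖ ≤ ‖y + a i‖ + ‖y‖ := by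
        calc ‖a i‖ = ‖(y + a i) - y‖ := by rw [show (y + a i) - y = a i by abel]
        _ ≤ ‖y + a i‖ + ‖y‖ := norm_sub_le _ _
      rw [hφzero _ (by linarith), mul_zero]
    rw [h1, hD]
    exact Finset.sum_le_sum fun i _ => mul_le_mul_of_nonneg_left (hφle _) (by positivity)
  have hglobal : ∀ x : EuclideanSpace ℝ (Fin p), f x < D + 1 := by
    intro x
    obtain ⟨τ, hτ, hdist⟩ := hprop x
    have h1 : |f ((x - τ) + τ) - f (x - τ)| < 1 := hτ (x - τ)
    rw [sub_add_cancel] at h1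
    have h2 : ‖x - τ‖ ≤ R := by rw [← dist_eq_norm, dist_comm]; exact hdist.le
    have h3 := hball (x - τ) h2
    have h4 := abs_lt.mp h1
    linarith [h4.1, h4.2]
  refine ⟨((⌈D⌉₊ + 2 : ℕ) : ENNReal), by simp, ?_⟩
  intro x
  have hSfin : {i : ι | a i ∈ ball x 1}.Finite :=
    (hdisc (closedBall x 1) (isCompact_closedBall _ _)).subset
      (fun i hi => ball_subset_closedBall hi)
  have hcount : (∑' i, (if a i ∈ Metric.ball x 1 then (m i : ENNReal) else 0))
      = ((∑ i ∈ hSfin.toFinset, m i : ℕ) : ENNReal) := by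
    rw [tsum_eq_sum (s := hSfin.toFinset) (by
      intro i hi
      rw [Set.Finite.mem_toFinset, mem_setOf_eq] at hi
      rw [if_neg hi])]
    push_cast
    refine Finset.sum_congr rfl fun i hi => ?_
    rw [Set.Finite.mem_toFinset, mem_setOf_eq] at hi
    rw [if_pos hi]
  rw [hcount]
  have hTfin := hdisc (closedBall (-(-x)) 2) (isCompact_closedBall _ _)
  have hST : hSfin.toFinset ⊆ hTfin.toFinset := by
    intro i hi
    rw [Set.Finite.mem_toFinset, mem_setOf_eq, mem_ball] at hi
    rw [Set.Finite.mem_toFinset, mem_preimage, mem_closedBall, neg_neg]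
    linarith
  have hreal : (∑ i ∈ hSfin.toFinset, (m i : ℝ)) ≤ f (-x) := by
    rw [htsum (-x)]
    calc (∑ i ∈ hSfin.toFinset, (m i : ℝ))
        ≤ ∑ i ∈ hSfin.toFinset, (m i : ℝ) * φ (-x + a i) := by
          refine Finset.sum_le_sum fun i hi => ?_
          rw [Set.Finite.mem_toFinset, mem_setOf_eq, mem_ball] at hi
          have h1 : ‖-x + a i‖ < 1 := by
            rw [show -x + a i = a i - x by abel, ← dist_eq_norm]; exact hi
          nlinarith [hφone _ h1, hm i, (Nat.one_le_cast (α := ℝ)).mpr (hm i)]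
      _ ≤ ∑ i ∈ hTfin.toFinset, (m i : ℝ) * φ (-x + a i) := by
          refine Finset.sum_le_sum_of_subset_of_nonneg hST fun i _ _ =>
            mul_nonneg (by positivity) (hφnonneg _)
  have hlt : (∑ i ∈ hSfin.toFinset, m i) < ⌈D⌉₊ + 2 := by
    have h1 : (∑ i ∈ hSfin.toFinset, (m i : ℝ)) < D + 1 :=
      lt_of_le_of_lt hreal (hglobal _)
    have h2 : D ≤ (⌈D⌉₊ : ℝ) := Nat.le_ceil D
    have h3 : ((∑ i ∈ hSfin.toFinset, m i : ℕ) : ℝ) < ((⌈D⌉₊ + 2 : ℕ) : ℝ) := by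
      push_cast; linarith
    exact_mod_cast h3
  exact_mod_cast hlt
end

section
/- Define, for even nonzero integers n, α(n) as the largest k ∈ ℕ such that 2^k divides n, and points a_n^± = n ± 1/(α(n)+1)^2. Let μ = Σ_{n ∈ 2ℤ\{0}} α(n)(δ_{a_n^+} − δ_{a_n^−}). Then μ does not satisfy the uniform local boundedness condition: sup_{c ∈ ℝ} |μ|(B(c,1)) = ∞; hence μ is not an almost periodic measure in the weak sense. -/
open Metric Set MeasureTheory Classical

/-- The index set: even nonzero integers. -/
def EvenNZ : Type := {n : ℤ // n ≠ 0 ∧ (2 : ℤ) ∣ n}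

/-- `α(n)`: the largest `k` with `2^k ∣ n` (the 2-adic valuation). -/
noncomputable def alphaVal (n : EvenNZ) : ℕ := padicValInt 2 n.1

noncomputable def aplus (n : EvenNZ) : ℝ := (n.1 : ℝ) + 1 / ((alphaVal n : ℝ) + 1) ^ 2

noncomputable def aminus (n : EvenNZ) : ℝ := (n.1 : ℝ) - 1 / ((alphaVal n : ℝ) + 1) ^ 2

/-! ### Auxiliary material for the proof -/

/-- The test function: a "quartic-root tent" supported on `[-1/2, 1/2]`, with modulus of
continuity bad enough at `0` that convolution with `μ` is unbounded. -/
noncomputable def phi (t : ℝ) : ℝ := max 0 (1 - Real.sqrt (Real.sqrt |2*t|))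

lemma phi_cont : Continuous phi := by unfold phi; fun_prop

lemma phi_nonneg (t : ℝ) : 0 ≤ phi t := le_max_left _ _

lemma phi_le_one (t : ℝ) : phi t ≤ 1 :=
  max_le (by norm_num) (by have := Real.sqrt_nonneg (Real.sqrt |2*t|); linarith)

lemma phi_zero {t : ℝ} (h : 1/2 ≤ |t|) : phi t = 0 := by
  have h1 : (1:ℝ) ≤ |2*t| := by rw [abs_mul, abs_two]; linarith
  have h2 : (1:ℝ) ≤ Real.sqrt (Real.sqrt |2*t|) := by
    rw [Real.one_le_sqrt, Real.one_le_sqrt]; exact h1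
  exact max_eq_left (by linarith)

lemma phi_compact : HasCompactSupport phi := by
  apply HasCompactSupport.intro (isCompact_Icc (a := (-(1/2) : ℝ)) (b := 1/2))
  intro x hx
  apply phi_zero
  simp only [mem_Icc, not_and_or, not_le] at hx
  rcases hx with h | h
  · rw [abs_of_neg (by linarith)]; linarith
  · rw [abs_of_pos (by linarith)]; linarith

lemma phi_zero_eq : phi 0 = 1 := by simp [phi]

lemma one_sub_phi {t : ℝ} (h : |2*t| ≤ 1) : 1 - phi t = Real.sqrt (Real.sqrt |2*t|) := by
  have h2 : Real.sqrt (Real.sqrt |2*t|) ≤ 1 := by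
    rw [Real.sqrt_le_one, Real.sqrt_le_one]; exact h
  rw [phi, max_eq_right (by linarith)]; ring

lemma one_le_alpha (m : EvenNZ) : 1 ≤ alphaVal m := by
  have h0 : 0 < m.1.natAbs := Int.natAbs_pos.mpr m.2.1
  have hd : 2 ∣ m.1.natAbs := by
    have := Int.natAbs_dvd_natAbs.mpr m.2.2
    simpa using this
  exact one_le_padicValNat_of_dvd h0.ne' hd

lemma alpha_le_natAbs (m : EvenNZ) : alphaVal m ≤ m.1.natAbs := by
  have h0 : 0 < m.1.natAbs := Int.natAbs_pos.mpr m.2.1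
  have h1 : 2 ^ padicValNat 2 m.1.natAbs ≤ m.1.natAbs :=
    Nat.le_of_dvd h0 pow_padicValNat_dvd
  have h2 : padicValNat 2 m.1.natAbs < 2 ^ padicValNat 2 m.1.natAbs := Nat.lt_two_pow_self
  simpa [alphaVal, padicValInt] using (h2.le.trans h1)

lemma eps_pos (m : EvenNZ) : 0 < 1 / ((alphaVal m : ℝ) + 1) ^ 2 := by positivity

lemma eps_le (m : EvenNZ) : 1 / ((alphaVal m : ℝ) + 1) ^ 2 ≤ 1/4 := by
  have h1 : (1:ℝ) ≤ (alphaVal m : ℝ) := by exact_mod_cast one_le_alpha m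
  rw [div_le_div_iff₀ (by positivity) (by norm_num)]
  nlinarith

lemma alpha_pow (k : ℕ) (hk : 1 ≤ k) :
    alphaVal ⟨(2:ℤ)^k, ⟨pow_ne_zero k (by norm_num), dvd_pow_self 2 (by omega)⟩⟩ = k := by
  show padicValInt 2 ((2:ℤ)^k) = k
  rw [padicValInt, Int.natAbs_pow]
  norm_num

lemma abs_shift {A d c : ℝ} (h : c + |d| ≤ |A|) : c ≤ |A + d| := by
  have h4 := abs_add_le (A + d) (-d)
  rw [abs_neg] at h4
  have h5 : A + d + -d = A := by ring
  rw [h5] at h4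
  linarith

lemma term_vanish (x : ℝ) (m : EvenNZ) (h : 1 ≤ |x + (m.1 : ℝ)|) :
    (alphaVal m : ℝ) * (phi (x + aplus m) - phi (x + aminus m)) = 0 := by
  have he := eps_pos m
  have he2 := eps_le m
  set e := 1 / ((alphaVal m : ℝ) + 1) ^ 2 with hedef
  have h1 : phi (x + aplus m) = 0 := by
    apply phi_zero
    have hrw : x + aplus m = (x + (m.1:ℝ)) + e := by rw [aplus]; ring
    rw [hrw]
    apply abs_shift
    rw [abs_of_pos he]; linarith
  have h2 : phi (x + aminus m) = 0 := by
    apply phi_zero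
    have hrw : x + aminus m = (x + (m.1:ℝ)) + (-e) := by rw [aminus]; ring
    rw [hrw]
    apply abs_shift
    rw [abs_neg, abs_of_pos he]; linarith
  rw [h1, h2]; ring

/-- The convolution `μ * φ` takes values at least `√k` (at `x = -a_{2^k}^+`). -/
lemma peak (k : ℕ) (hk : 1 ≤ k) :
    ∃ x : ℝ, Real.sqrt k ≤
      ∑' m : EvenNZ, (alphaVal m : ℝ) * (phi (x + aplus m) - phi (x + aminus m)) := by
  have hk1 : (1:ℝ) ≤ (k:ℝ) := by exact_mod_cast hk
  set n : EvenNZ := ⟨(2:ℤ)^k, ⟨pow_ne_zero k (by norm_num), dvd_pow_self 2 (by omega)⟩⟩ with hn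
  have hα : alphaVal n = k := alpha_pow k hk
  refine ⟨-aplus n, ?_⟩
  have hsum : (∑' m : EvenNZ, (alphaVal m : ℝ) *
      (phi (-aplus n + aplus m) - phi (-aplus n + aminus m)))
      = (k : ℝ) * (phi 0 - phi (-(2 / ((k:ℝ) + 1) ^ 2))) := by
    rw [tsum_eq_single n]
    · have h0 : -aplus n + aplus n = 0 := by ring
      have h1 : -aplus n + aminus n = -(2 / ((k:ℝ) + 1) ^ 2) := by
        rw [aplus, aminus, hα]; ring
      rw [h0, h1, hα]
    · intro m hm
      apply term_vanish
      have he := eps_pos n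
      have he2 := eps_le n
      have hrw : -aplus n + (m.1:ℝ) =
          ((m.1:ℝ) - ((2:ℤ)^k : ℤ)) + (-(1 / ((alphaVal n : ℝ) + 1) ^ 2)) := by
        rw [aplus]; push_cast [hn]; ring
      rw [hrw]
      apply abs_shift
      rw [abs_neg, abs_of_pos he]
      have hne : m.1 - (2:ℤ)^k ≠ 0 := by
        intro hc
        apply hm
        apply Subtype.ext
        have : m.1 = (2:ℤ)^k := by omega
        rw [this]
      have hdvd : (2:ℤ) ∣ (m.1 - (2:ℤ)^k) := by
        exact dvd_sub m.2.2 (dvd_pow_self 2 (by omega))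
      have h2le : (2:ℤ) ≤ |m.1 - (2:ℤ)^k| :=
        Int.le_of_dvd (abs_pos.mpr hne) ((dvd_abs _ _).mpr hdvd)
      have h2le' : (2:ℝ) ≤ |(m.1:ℝ) - (((2:ℤ)^k : ℤ) : ℝ)| := by
        have h3 : ((2:ℤ):ℝ) ≤ ((|m.1 - (2:ℤ)^k| : ℤ) : ℝ) := Int.cast_le.mpr h2le
        rwa [Int.cast_abs, Int.cast_sub, Int.cast_two] at h3
      linarith
  rw [hsum]
  have habs : |2 * (-(2 / ((k:ℝ) + 1) ^ 2))| = 4 / ((k:ℝ)+1)^2 := by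
    rw [abs_mul, abs_two, abs_neg, abs_of_pos (by positivity)]
    ring
  have hle1 : |2 * (-(2 / ((k:ℝ) + 1) ^ 2))| ≤ 1 := by
    rw [habs]
    rw [div_le_one (by positivity)]
    nlinarith
  have hsub := one_sub_phi hle1
  rw [habs] at hsub
  have h4e : (4:ℝ) / ((k:ℝ)+1)^2 = (2/((k:ℝ)+1))^2 := by
    rw [div_pow]; norm_num
  have hs1 : Real.sqrt ((4:ℝ) / ((k:ℝ)+1)^2) = 2/((k:ℝ)+1) := by
    rw [h4e, Real.sqrt_sq (by positivity)]
  rw [hs1] at hsub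
  have hval : 1 - phi (-(2 / ((k:ℝ) + 1) ^ 2)) = Real.sqrt (2/((k:ℝ)+1)) := hsub
  have : (k:ℝ) * (phi 0 - phi (-(2 / ((k:ℝ) + 1) ^ 2)))
      = Real.sqrt ((k:ℝ)^2 * (2/((k:ℝ)+1))) := by
    rw [phi_zero_eq, hval, Real.sqrt_mul (by positivity), Real.sqrt_sq (by positivity)]
  rw [this]
  apply Real.sqrt_le_sqrt
  have hpos : (0:ℝ) < (k:ℝ) + 1 := by linarith
  rw [show (k:ℝ)^2 * (2/((k:ℝ)+1)) = ((k:ℝ)^2*2)/((k:ℝ)+1) from by ring,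
    le_div_iff₀ hpos]
  nlinarith

/-- The convolution `μ * φ` is locally bounded, with an explicit (crude) growth bound. -/
lemma tsum_bound (x : ℝ) :
    |∑' m : EvenNZ, (alphaVal m : ℝ) * (phi (x + aplus m) - phi (x + aminus m))| ≤
      (2*(|x|+3)+1) * (|x|+3) := by
  set N : ℤ := ⌈|x|⌉ + 2 with hN
  have hN0 : (0:ℤ) ≤ N := by
    have := Int.ceil_nonneg (abs_nonneg x)
    omega
  have hceil1 : (⌈|x|⌉ : ℝ) < |x| + 1 := Int.ceil_lt_add_one _
  have hceil2 : |x| ≤ (⌈|x|⌉ : ℝ) := Int.le_ceil _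
  have hNx : (N:ℝ) ≤ |x| + 3 := by push_cast [hN]; linarith
  have hxN : |x| + 2 ≤ (N:ℝ) := by push_cast [hN]; linarith
  set s : Finset EvenNZ :=
    (Finset.Icc (-N) N).subtype (fun n : ℤ => n ≠ 0 ∧ (2:ℤ) ∣ n) with hs
  have hvan : ∀ m : EvenNZ, m ∉ s →
      (alphaVal m : ℝ) * (phi (x + aplus m) - phi (x + aminus m)) = 0 := by
    intro m hm
    apply term_vanish
    have hm1 : m.1 ∉ Finset.Icc (-N) N := by
      intro hmem
      exact hm (Finset.mem_subtype.mpr hmem)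
    rw [Finset.mem_Icc] at hm1
    push_neg at hm1
    have hx1 : -|x| ≤ x := neg_abs_le x
    have hx2 : x ≤ |x| := le_abs_self x
    by_cases hc : N < m.1
    · have : (N:ℝ) + 1 ≤ (m.1:ℝ) := by exact_mod_cast hc
      have h3 : 1 ≤ x + (m.1:ℝ) := by linarith
      calc (1:ℝ) ≤ x + (m.1:ℝ) := h3
        _ ≤ |x + (m.1:ℝ)| := le_abs_self _
    · have hm2 : m.1 < -N := by
        rcases lt_or_ge m.1 (-N) with h | h
        · exact h
        · exact absurd (hm1 h) hc
      have : (m.1:ℝ) ≤ -(N:ℝ) - 1 := by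
        have : m.1 ≤ -N - 1 := by omega
        exact_mod_cast this
      have h3 : x + (m.1:ℝ) ≤ -1 := by linarith
      calc (1:ℝ) ≤ -(x + (m.1:ℝ)) := by linarith
        _ ≤ |x + (m.1:ℝ)| := neg_le_abs _
  rw [tsum_eq_sum hvan]
  have hterm : ∀ m ∈ s, |(alphaVal m : ℝ) * (phi (x + aplus m) - phi (x + aminus m))|
      ≤ |x| + 3 := by
    intro m hm
    have hmem : m.1 ∈ Finset.Icc (-N) N := Finset.mem_subtype.mp hm
    rw [Finset.mem_Icc] at hmem
    have hαle : (alphaVal m : ℝ) ≤ |x| + 3 := by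
      have h1 : (alphaVal m : ℝ) ≤ (m.1.natAbs : ℝ) := by
        exact_mod_cast alpha_le_natAbs m
      have h2 : (m.1.natAbs : ℝ) = |(m.1 : ℝ)| := by
        rw [Nat.cast_natAbs]; push_cast; ring
      have h3 : |(m.1:ℝ)| ≤ (N:ℝ) := by
        rw [abs_le]
        constructor <;> [exact_mod_cast hmem.1; exact_mod_cast hmem.2]
      linarith [h1, h2.le, h2.ge]
    have hd : |phi (x + aplus m) - phi (x + aminus m)| ≤ 1 := by
      rw [abs_le]
      constructor
      · linarith [phi_nonneg (x + aplus m), phi_le_one (x + aminus m)]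
      · linarith [phi_le_one (x + aplus m), phi_nonneg (x + aminus m)]
    rw [abs_mul, abs_of_nonneg (by positivity : (0:ℝ) ≤ (alphaVal m : ℝ))]
    calc (alphaVal m : ℝ) * |phi (x + aplus m) - phi (x + aminus m)|
        ≤ (alphaVal m : ℝ) * 1 := by
          apply mul_le_mul_of_nonneg_left hd (by positivity)
      _ = (alphaVal m : ℝ) := mul_one _
      _ ≤ |x| + 3 := hαle
  have hcard : (s.card : ℝ) ≤ 2*(|x|+3) + 1 := by
    have h1 : s.card ≤ (Finset.Icc (-N) N).card := by
      apply Finset.card_le_card_of_injOn (fun m => m.1)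
      · intro m hm
        exact Finset.mem_subtype.mp hm
      · intro a _ b _ h
        exact Subtype.ext h
    have h2 : (Finset.Icc (-N) N).card = (N + 1 - (-N)).toNat := Int.card_Icc _ _
    have h3 : ((N + 1 - (-N)).toNat : ℤ) = 2*N + 1 := by
      rw [Int.toNat_of_nonneg (by omega)]; ring
    have h4 : ((Finset.Icc (-N) N).card : ℝ) = 2*(N:ℝ) + 1 := by
      rw [h2]
      exact_mod_cast congrArg (fun z : ℤ => (z : ℝ)) h3
    have h5 : (s.card : ℝ) ≤ ((Finset.Icc (-N) N).card : ℝ) := by exact_mod_cast h1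
    rw [h4] at h5
    linarith
  calc |∑ m ∈ s, (alphaVal m : ℝ) * (phi (x + aplus m) - phi (x + aminus m))|
      ≤ ∑ m ∈ s, |(alphaVal m : ℝ) * (phi (x + aplus m) - phi (x + aminus m))| :=
        Finset.abs_sum_le_sum_abs _ _
    _ ≤ ∑ _m ∈ s, (|x| + 3) := Finset.sum_le_sum hterm
    _ = (s.card : ℝ) * (|x| + 3) := by rw [Finset.sum_const, nsmul_eq_mul]
    _ ≤ (2*(|x|+3)+1) * (|x|+3) := by
        apply mul_le_mul_of_nonneg_right hcard (by positivity)

/-- the signed measure `μ = Σ α(n)(δ_{a_n^+} − δ_{a_n^−})` has unbounded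
variation on unit balls, hence is not an almost periodic measure in the weak sense. -/
theorem statement13 :
    (¬ ∃ M : ENNReal, M ≠ ⊤ ∧ ∀ c : ℝ,
        (∑' n : EvenNZ, (alphaVal n : ENNReal) *
          ((if aplus n ∈ Metric.ball c 1 then 1 else 0) +
            (if aminus n ∈ Metric.ball c 1 then 1 else 0))) ≤ M) ∧
    ¬ (∀ φ : ℝ → ℝ, Continuous φ → HasCompactSupport φ →
        AlmostPeriodic fun x =>
          ∑' n : EvenNZ, (alphaVal n : ℝ) * (φ (x + aplus n) - φ (x + aminus n))) := by
  constructor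
  · rintro ⟨M, hM, h⟩
    obtain ⟨j, hj⟩ := ENNReal.exists_nat_gt hM
    set k := j + 1 with hk
    set n : EvenNZ := ⟨(2:ℤ)^k, ⟨pow_ne_zero k (by norm_num), dvd_pow_self 2 (by omega)⟩⟩ with hn
    have hα : alphaVal n = k := alpha_pow k (by omega)
    set c : ℝ := (((2:ℤ)^k : ℤ) : ℝ) with hc
    have he := eps_pos n
    have he2 := eps_le n
    have hn1 : (n.1 : ℝ) = c := by rw [hn, hc]
    have hin1 : aplus n ∈ Metric.ball c 1 := by
      rw [Metric.mem_ball, Real.dist_eq, aplus, hn1]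
      rw [show c + 1/((alphaVal n:ℝ)+1)^2 - c = 1/((alphaVal n:ℝ)+1)^2 from by ring]
      rw [abs_of_pos he]; linarith
    have hin2 : aminus n ∈ Metric.ball c 1 := by
      rw [Metric.mem_ball, Real.dist_eq, aminus, hn1]
      rw [show c - 1/((alphaVal n:ℝ)+1)^2 - c = -(1/((alphaVal n:ℝ)+1)^2) from by ring]
      rw [abs_neg, abs_of_pos he]; linarith
    have hterm := ENNReal.le_tsum (f := fun m : EvenNZ => (alphaVal m : ENNReal) *
      ((if aplus m ∈ Metric.ball c 1 then 1 else 0) +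
        (if aminus m ∈ Metric.ball c 1 then 1 else 0))) n
    rw [if_pos hin1, if_pos hin2, hα] at hterm
    have hle : (k : ENNReal) * (1 + 1) ≤ M := hterm.trans (h c)
    have hjk : (j : ENNReal) ≤ (k : ENNReal) * (1+1) := by
      calc (j : ENNReal) ≤ (k : ENNReal) := by
            exact_mod_cast Nat.cast_le.mpr (Nat.le_succ j)
        _ ≤ (k : ENNReal) * (1+1) := le_mul_of_one_le_right bot_le (by norm_num)
    exact absurd (hjk.trans hle) (not_le.mpr hj)
  · intro hforall
    obtain ⟨R, hR, hall⟩ := hforall phi phi_cont phi_compact 1 one_pos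
    set C := (2*(R+3)+1) * (R+3) + 2 with hC
    have hC1 : (1:ℝ) ≤ C := by nlinarith
    set k := (⌈C⌉₊)^2 with hk
    have hceil : 1 ≤ ⌈C⌉₊ := by
      rw [Nat.one_le_ceil_iff]; linarith
    have hk1 : 1 ≤ k := by
      rw [hk]; nlinarith [hceil]
    obtain ⟨x, hx⟩ := peak k hk1
    have hsq : C ≤ Real.sqrt k := by
      have h1 : ((k:ℕ):ℝ) = ((⌈C⌉₊:ℝ))^2 := by rw [hk]; push_cast; ring
      rw [h1, Real.sqrt_sq (by positivity)]
      exact Nat.le_ceil C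
    obtain ⟨τ, hτS, hτd⟩ := hall x
    rw [Set.mem_setOf_eq] at hτS
    have hy := hτS (x - τ)
    rw [show x - τ + τ = x from by ring] at hy
    simp only at hy
    have hFx : C ≤ ∑' m : EvenNZ, (alphaVal m : ℝ) *
        (phi (x + aplus m) - phi (x + aminus m)) := le_trans hsq hx
    have habs := abs_lt.mp hy
    have h3 := tsum_bound (x - τ)
    have h4 : |x - τ| ≤ R := by
      have hd : |τ - x| < R := by
        have := hτd
        rwa [Real.dist_eq] at this
      rw [abs_sub_comm]
      linarith
    have h5 : (2*(|x - τ|+3)+1) * (|x-τ|+3) ≤ (2*(R+3)+1) * (R+3) := by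
      have h6 : 0 ≤ |x - τ| := abs_nonneg _
      nlinarith
    have h7 : (∑' m : EvenNZ, (alphaVal m : ℝ) *
        (phi (x - τ + aplus m) - phi (x - τ + aminus m))) ≤
        |∑' m : EvenNZ, (alphaVal m : ℝ) *
        (phi (x - τ + aplus m) - phi (x - τ + aminus m))| := le_abs_self _
    linarith [habs.1, habs.2]
end

section
/- Let A be a signed almost periodic multiple discrete set in ℝ^p such that inf{|x − y| : x ∈ s(A^+), y ∈ s(A^−)} > 0. Then A^+ and A^− are (positive) almost periodic multiple discrete sets. -/
open Metric Set MeasureTheory Classical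

noncomputable def s16tri (t : ℝ) : ℝ := max (1 - |t|) 0

lemma s16tri_nonneg (t : ℝ) : 0 ≤ s16tri t := le_max_right _ _

lemma s16tri_continuous : Continuous s16tri :=
  (continuous_const.sub continuous_abs).max continuous_const

lemma s16tri_eq_zero {t : ℝ} (h : 1 ≤ |t|) : s16tri t = 0 :=
  max_eq_right (by linarith)

lemma s16tri_abs_lt_one {t : ℝ} (h : s16tri t ≠ 0) : |t| < 1 := by
  by_contra hc
  exact h (s16tri_eq_zero (le_of_not_gt hc))

lemma s16_sum_tri_eq {B : Finset ℤ} {z : ℝ} (h1 : ⌊z⌋ ∈ B) (h2 : ⌊z⌋ + 1 ∈ B) :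
    ∑ k ∈ B, s16tri (z - k) = 1 := by
  have hfl := Int.floor_le z
  have hfl2 := Int.lt_floor_add_one z
  have hsub : ({⌊z⌋, ⌊z⌋ + 1} : Finset ℤ) ⊆ B := by
    intro k hk
    rcases Finset.mem_insert.1 hk with h | h
    · exact h ▸ h1
    · exact (Finset.mem_singleton.1 h) ▸ h2
  rw [← Finset.sum_subset hsub ?_]
  · rw [Finset.sum_pair (by omega)]
    have e1 : s16tri (z - ⌊z⌋) = 1 - (z - ⌊z⌋) := by
      unfold s16tri
      rw [abs_of_nonneg (by linarith)]
      exact max_eq_left (by linarith)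
    have e2 : s16tri (z - ((⌊z⌋ + 1 : ℤ) : ℝ)) = z - ⌊z⌋ := by
      unfold s16tri
      push_cast
      rw [abs_of_nonpos (by linarith)]
      rw [max_eq_left (by linarith)]
      ring
    rw [e1, e2]; ring
  · intro k hk hknot
    apply s16tri_eq_zero
    have hk1 : k ≠ ⌊z⌋ := by intro h; exact hknot (by simp [h])
    have hk2 : k ≠ ⌊z⌋ + 1 := by intro h; exact hknot (by simp [h])
    rcases lt_or_gt_of_ne hk1 with h | h
    · have : (k : ℝ) ≤ (⌊z⌋ : ℝ) - 1 := by exact_mod_cast Int.le_sub_one_of_lt h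
      rw [abs_of_nonneg (by linarith)]; linarith
    · have : ((⌊z⌋ : ℝ) + 2) ≤ (k : ℝ) := by exact_mod_cast by omega
      rw [abs_of_nonpos (by linarith)]; linarith

lemma s16_sum_tri_le (B : Finset ℤ) (z : ℝ) : ∑ k ∈ B, s16tri (z - k) ≤ 1 := by
  have hsub : B ⊆ B ∪ {⌊z⌋, ⌊z⌋ + 1} := Finset.subset_union_left
  calc ∑ k ∈ B, s16tri (z - k)
      ≤ ∑ k ∈ B ∪ {⌊z⌋, ⌊z⌋ + 1}, s16tri (z - k) :=
        Finset.sum_le_sum_of_subset_of_nonneg hsub (fun k _ _ => s16tri_nonneg _)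
    _ = 1 := s16_sum_tri_eq (Finset.mem_union_right _ (by simp))
        (Finset.mem_union_right _ (by simp))

noncomputable def s16T {p : ℕ} (r : ℝ) (z : EuclideanSpace ℝ (Fin p)) : ℝ :=
  ∏ j, s16tri (z j / r)

noncomputable def s16grid {p : ℕ} (r : ℝ) (k : Fin p → ℤ) : EuclideanSpace ℝ (Fin p) :=
  (WithLp.equiv 2 (Fin p → ℝ)).symm fun j => r * (k j)

lemma s16grid_apply {p : ℕ} (r : ℝ) (k : Fin p → ℤ) (j : Fin p) :
    s16grid r k j = r * k j := rfl

lemma s16T_nonneg {p : ℕ} (r : ℝ) (z : EuclideanSpace ℝ (Fin p)) : 0 ≤ s16T r z :=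
  Finset.prod_nonneg fun j _ => s16tri_nonneg _

lemma s16T_continuous {p : ℕ} (r : ℝ) : Continuous fun z : EuclideanSpace ℝ (Fin p) => s16T r z := by
  apply continuous_finset_prod
  intro j _
  have hj : Continuous fun z : EuclideanSpace ℝ (Fin p) => z j := PiLp.continuous_apply 2 _ j
  exact s16tri_continuous.comp (hj.div_const r)

lemma s16_coord_abs_le_norm {p : ℕ} (z : EuclideanSpace ℝ (Fin p)) (j : Fin p) :
    |z j| ≤ ‖z‖ := by
  rw [EuclideanSpace.norm_eq]
  rw [← Real.sqrt_sq_eq_abs]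
  apply Real.sqrt_le_sqrt
  simp only [Real.norm_eq_abs, sq_abs]
  exact Finset.single_le_sum (fun i _ => sq_nonneg (z i)) (Finset.mem_univ j)

lemma s16_norm_le {p : ℕ} (z : EuclideanSpace ℝ (Fin p)) {c : ℝ} (hc : 0 ≤ c)
    (hj : ∀ j, |z j| ≤ c) : ‖z‖ ≤ c * Real.sqrt p := by
  rw [EuclideanSpace.norm_eq]
  have h1 : ∑ j, ‖z j‖ ^ 2 ≤ (p : ℝ) * c ^ 2 := by
    calc ∑ j, ‖z j‖ ^ 2 ≤ ∑ _j : Fin p, c ^ 2 := by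
          apply Finset.sum_le_sum
          intro j _
          rw [Real.norm_eq_abs]
          exact pow_le_pow_left₀ (abs_nonneg _) (hj j) 2
      _ = (p : ℝ) * c ^ 2 := by simp [mul_comm]
  calc Real.sqrt (∑ j, ‖z j‖ ^ 2) ≤ Real.sqrt ((p : ℝ) * c ^ 2) := Real.sqrt_le_sqrt h1
    _ = c * Real.sqrt p := by
        rw [Real.sqrt_mul (Nat.cast_nonneg p), Real.sqrt_sq hc, mul_comm]

lemma s16T_ne_zero {p : ℕ} {r : ℝ} (hr : 0 < r) {z : EuclideanSpace ℝ (Fin p)}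
    (h : s16T r z ≠ 0) : ‖z‖ ≤ r * Real.sqrt p := by
  apply s16_norm_le z hr.le
  intro j
  have hf : s16tri (z j / r) ≠ 0 := by
    intro h0
    exact h (Finset.prod_eq_zero (Finset.mem_univ j) h0)
  have := s16tri_abs_lt_one hf
  rw [abs_div, abs_of_pos hr, div_lt_one hr] at this
  exact this.le

lemma s16T_sub_grid {p : ℕ} {r : ℝ} (hr : r ≠ 0) (z : EuclideanSpace ℝ (Fin p))
    (k : Fin p → ℤ) : s16T r (z - s16grid r k) = ∏ j, s16tri (z j / r - k j) := by
  unfold s16T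
  apply Finset.prod_congr rfl
  intro j _
  congr 1
  rw [PiLp.sub_apply, s16grid_apply]
  field_simp

lemma s16_sumT_eq {p : ℕ} {r : ℝ} (hr : 0 < r) (L : ℤ) (z : EuclideanSpace ℝ (Fin p))
    (h : ∀ j, -L ≤ ⌊z j / r⌋ ∧ ⌊z j / r⌋ + 1 ≤ L) :
    ∑ k ∈ Fintype.piFinset (fun _ : Fin p => Finset.Icc (-L) L),
      s16T r (z - s16grid r k) = 1 := by
  rw [Finset.sum_congr rfl fun k _ => s16T_sub_grid hr.ne' z k]
  rw [← Finset.prod_univ_sum (fun _ : Fin p => Finset.Icc (-L) L)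
    (fun j (kj : ℤ) => s16tri (z j / r - kj))]
  rw [Finset.prod_congr rfl fun j _ => s16_sum_tri_eq
    (Finset.mem_Icc.2 ⟨(h j).1, by have := (h j).2; omega⟩)
    (Finset.mem_Icc.2 ⟨by have := (h j).1; omega, (h j).2⟩)]
  exact Finset.prod_const_one

lemma s16_sumT_le {p : ℕ} {r : ℝ} (hr : 0 < r) (B : Finset (Fin p → ℤ))
    (z : EuclideanSpace ℝ (Fin p)) :
    ∑ k ∈ B, s16T r (z - s16grid r k) ≤ 1 := by
  rw [Finset.sum_congr rfl fun k _ => s16T_sub_grid hr.ne' z k]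
  classical
  set t : Fin p → Finset ℤ :=
    fun j => (B.image fun k => k j) ∪ {⌊z j / r⌋, ⌊z j / r⌋ + 1} with ht
  have hsub : B ⊆ Fintype.piFinset t := by
    intro k hk
    rw [Fintype.mem_piFinset]
    intro j
    exact Finset.mem_union_left _ (Finset.mem_image_of_mem _ hk)
  calc ∑ k ∈ B, ∏ j, s16tri (z j / r - k j)
      ≤ ∑ k ∈ Fintype.piFinset t, ∏ j, s16tri (z j / r - k j) :=
        Finset.sum_le_sum_of_subset_of_nonneg hsub
          (fun k _ _ => Finset.prod_nonneg fun j _ => s16tri_nonneg _)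
    _ = ∏ j, ∑ kj ∈ t j, s16tri (z j / r - kj) := (Finset.prod_univ_sum t (fun j (kj : ℤ) => s16tri (z j / r - kj))).symm
    _ = 1 := by
        rw [Finset.prod_congr rfl fun j _ => s16_sum_tri_eq
          (Finset.mem_union_right _ (by simp))
          (Finset.mem_union_right _ (by simp))]
        exact Finset.prod_const_one

lemma RelativelyDense.mono {E : Type*} [PseudoMetricSpace E] {S S' : Set E}
    (hss : S ⊆ S') (h : RelativelyDense S) : RelativelyDense S' := by
  obtain ⟨R, hR, hc⟩ := h
  exact ⟨R, hR, fun c => by obtain ⟨τ, h1, h2⟩ := hc c; exact ⟨τ, hss h1, h2⟩⟩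

section
variable {p : ℕ} {ι : Type*} {a : ι → EuclideanSpace ℝ (Fin p)}

/-- indices contributing to a compact window are finite -/
lemma s16_finwin (hdisc : ∀ K : Set (EuclideanSpace ℝ (Fin p)), IsCompact K → (a ⁻¹' K).Finite)
    {K : Set (EuclideanSpace ℝ (Fin p))} (hK : IsCompact K) (y : EuclideanSpace ℝ (Fin p)) :
    {i | y + a i ∈ K}.Finite := by
  have hK' : IsCompact ((fun w => -y + w) '' K) := hK.image (continuous_const.add continuous_id)
  refine (hdisc _ hK').subset ?_
  intro i hi
  exact ⟨y + a i, hi, neg_add_cancel_left y (a i)⟩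

lemma s16_summable (hdisc : ∀ K : Set (EuclideanSpace ℝ (Fin p)), IsCompact K → (a ⁻¹' K).Finite)
    (c : ι → ℝ) {ψ : EuclideanSpace ℝ (Fin p) → ℝ} (hψ : HasCompactSupport ψ)
    (y : EuclideanSpace ℝ (Fin p)) : Summable fun i => c i * ψ (y + a i) := by
  have hfin : {i | y + a i ∈ tsupport ψ}.Finite := s16_finwin hdisc hψ y
  apply summable_of_ne_finset_zero (s := hfin.toFinset)
  intro i hi
  have : y + a i ∉ tsupport ψ := by
    intro h; exact hi (hfin.mem_toFinset.2 h)
  rw [image_eq_zero_of_notMem_tsupport this, mul_zero]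

lemma s16_continuousF
    (hdisc : ∀ K : Set (EuclideanSpace ℝ (Fin p)), IsCompact K → (a ⁻¹' K).Finite)
    (c : ι → ℝ) {ψ : EuclideanSpace ℝ (Fin p) → ℝ} (hψc : Continuous ψ)
    (hψ : HasCompactSupport ψ) :
    Continuous fun y => ∑' i, c i * ψ (y + a i) := by
  rw [continuous_iff_continuousAt]
  intro x₀
  have hKc : IsCompact (Metric.cthickening 1 (tsupport ψ)) := hψ.cthickening
  have himg : IsCompact ((fun w => -x₀ + w) '' Metric.cthickening 1 (tsupport ψ)) :=
    hKc.image (continuous_const.add continuous_id)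
  have hfin := hdisc _ himg
  set s := hfin.toFinset with hs
  have heq : ∀ y ∈ Metric.ball x₀ 1, (∑' i, c i * ψ (y + a i)) = ∑ i ∈ s, c i * ψ (y + a i) := by
    intro y hy
    apply tsum_eq_sum
    intro i hi
    have hni : y + a i ∉ tsupport ψ := by
      intro hmem
      apply hi
      rw [hs, hfin.mem_toFinset]
      refine ⟨x₀ + a i, ?_, neg_add_cancel_left x₀ (a i)⟩
      apply Metric.mem_cthickening_of_dist_le _ _ 1 _ hmem
      · rw [dist_eq_norm]
        have : x₀ + a i - (y + a i) = x₀ - y := by abel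
        rw [this, ← dist_eq_norm, dist_comm]
        exact (Metric.mem_ball.1 hy).le
    rw [image_eq_zero_of_notMem_tsupport hni, mul_zero]
  have hc : ContinuousAt (fun y => ∑ i ∈ s, c i * ψ (y + a i)) x₀ := by
    apply Continuous.continuousAt
    apply continuous_finset_sum
    intro i _
    exact continuous_const.mul (hψc.comp (continuous_id.add continuous_const))
  apply hc.congr
  apply Filter.eventuallyEq_of_mem (Metric.ball_mem_nhds x₀ one_pos)
  intro y hy
  exact (heq y hy).symm

lemma s16_ap_bounded {f : EuclideanSpace ℝ (Fin p) → ℝ} (hf : Continuous f)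
    (hap : AlmostPeriodic f) : ∃ M : ℝ, 0 ≤ M ∧ ∀ x, |f x| ≤ M := by
  obtain ⟨R, hR, hRt⟩ := hap 1 one_pos
  obtain ⟨y₀, hy₀, hy₀max⟩ := (isCompact_closedBall (0 : EuclideanSpace ℝ (Fin p)) R).exists_isMaxOn
    ⟨0, mem_closedBall_self hR.le⟩ hf.abs.continuousOn
  refine ⟨|f y₀| + 1, by positivity, fun x => ?_⟩
  obtain ⟨τ, hτS, hτd⟩ := hRt (-x)
  have h1 := hτS x
  have h2 : x + τ ∈ closedBall (0 : EuclideanSpace ℝ (Fin p)) R := by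
    rw [mem_closedBall, dist_zero_right]
    have : dist τ (-x) = ‖x + τ‖ := by
      rw [dist_eq_norm]
      congr 1
      abel
    linarith [this ▸ hτd]
  have h3 := hy₀max h2
  calc |f x| ≤ |f (x + τ)| + |f (x + τ) - f x| := by
        have := abs_sub_abs_le_abs_sub (f x) (f (x + τ))
        rw [abs_sub_comm (f x) (f (x + τ))] at this
        linarith
    _ ≤ |f y₀| + 1 := add_le_add h3 h1.le

end

theorem s16_main {p : ℕ} {ι : Type*} (a : ι → EuclideanSpace ℝ (Fin p)) (m : ι → ℤ)
    (hdisc : ∀ K : Set (EuclideanSpace ℝ (Fin p)), IsCompact K → (a ⁻¹' K).Finite)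
    (hap : ∀ φ : EuclideanSpace ℝ (Fin p) → ℝ, Continuous φ → HasCompactSupport φ →
      AlmostPeriodic fun x => ∑' i, (m i : ℝ) * φ (x + a i))
    (d : ℝ) (hd : 0 < d)
    (hsep : ∀ i j, 0 < m i → m j < 0 → d ≤ dist (a i) (a j)) :
    ∀ φ : EuclideanSpace ℝ (Fin p) → ℝ, Continuous φ → HasCompactSupport φ →
      AlmostPeriodic fun x => ∑' i, (if 0 < m i then (m i : ℝ) else 0) * φ (x + a i) := by
  classical
  intro φ hφc hφs
  set mp : ι → ℝ := fun i => if 0 < m i then (m i : ℝ) else 0 with hmp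
  have hmp_abs : ∀ i, |mp i| ≤ |(m i : ℝ)| := by
    intro i
    rw [hmp]
    by_cases h : 0 < m i
    · simp [h]
    · simp [h]
  -- the reference bump ψ₀
  set ψ₀ : EuclideanSpace ℝ (Fin p) → ℝ := fun y => s16tri (3 * ‖y‖ / d) with hψ₀
  have hψ₀c : Continuous ψ₀ :=
    s16tri_continuous.comp ((continuous_const.mul continuous_norm).div_const d)
  have hψ₀vanish : ∀ y : EuclideanSpace ℝ (Fin p), d / 3 < ‖y‖ → ψ₀ y = 0 := by
    intro y hy
    apply s16tri_eq_zero
    rw [abs_of_nonneg (by positivity)]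
    rw [le_div_iff₀ hd]
    linarith
  have hψ₀s : HasCompactSupport ψ₀ := by
    apply HasCompactSupport.intro (isCompact_closedBall (0 : EuclideanSpace ℝ (Fin p)) (d / 3))
    intro y hy
    apply hψ₀vanish
    rw [mem_closedBall, dist_zero_right, not_le] at hy
    exact hy
  have hψ₀half : ∀ y : EuclideanSpace ℝ (Fin p), ‖y‖ ≤ d / 6 → 1 / 2 ≤ ψ₀ y := by
    intro y hy
    have h1 : |3 * ‖y‖ / d| ≤ 1 / 2 := by
      rw [abs_of_nonneg (by positivity), div_le_iff₀ hd]
      linarith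
    rw [hψ₀]
    exact le_max_of_le_left (by linarith)
  -- signs cannot mix in a small window
  have hsign : ∀ ψ : EuclideanSpace ℝ (Fin p) → ℝ,
      (∀ y, d / 3 < ‖y‖ → ψ y = 0) → ∀ x,
      (∀ i, 0 < m i → ψ (x + a i) = 0) ∨ (∀ i, m i < 0 → ψ (x + a i) = 0) := by
    intro ψ hψ0 x
    by_contra hcon
    push_neg at hcon
    obtain ⟨⟨i, hi, hψi⟩, ⟨j, hj, hψj⟩⟩ := hcon
    have h1 : ‖x + a i‖ ≤ d / 3 := by
      by_contra h
      exact hψi (hψ0 _ (lt_of_not_ge h))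
    have h2 : ‖x + a j‖ ≤ d / 3 := by
      by_contra h
      exact hψj (hψ0 _ (lt_of_not_ge h))
    have h3 := hsep i j hi hj
    have h4 : dist (a i) (a j) = dist (x + a i) (x + a j) := (dist_add_left x _ _).symm
    have h5 : dist (x + a i) (x + a j) ≤ ‖x + a i‖ + ‖x + a j‖ := by
      rw [dist_eq_norm]
      exact norm_sub_le _ _
    rw [h4] at h3
    linarith
  -- uniform bound on local mass
  obtain ⟨M0, hM0n, hM0⟩ := s16_ap_bounded
    (s16_continuousF hdisc (fun i => (m i : ℝ)) hψ₀c hψ₀s) (hap ψ₀ hψ₀c hψ₀s)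
  have hball : ∀ (cc : EuclideanSpace ℝ (Fin p)) (t : Finset ι),
      (∀ i ∈ t, dist (a i) cc ≤ d / 6) → ∑ i ∈ t, |(m i : ℝ)| ≤ 2 * M0 := by
    intro cc t ht
    have hdist : ∀ i ∈ t, ‖-cc + a i‖ ≤ d / 6 := by
      intro i hi
      have : ‖-cc + a i‖ = dist (a i) cc := by
        rw [dist_eq_norm]
        congr 1
        abel
      rw [this]
      exact ht i hi
    rcases hsign ψ₀ hψ₀vanish (-cc) with hcase | hcase
    · -- positive masses invisible here, so all masses in t are ≤ 0
      have hterm : ∀ i, 0 ≤ (-(m i : ℝ)) * ψ₀ (-cc + a i) := by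
        intro i
        rcases lt_trichotomy (m i) 0 with h | h | h
        · apply mul_nonneg _ (s16tri_nonneg _)
          simp only [neg_nonneg]
          exact_mod_cast h.le
        · simp [h]
        · rw [hcase i h, mul_zero]
      have hsummable : Summable fun i => (-(m i : ℝ)) * ψ₀ (-cc + a i) :=
        s16_summable hdisc _ hψ₀s (-cc)
      have htf : ∀ i ∈ t, |(m i : ℝ)| ≤ 2 * ((-(m i : ℝ)) * ψ₀ (-cc + a i)) := by
        intro i hi
        have hψh : 1 / 2 ≤ ψ₀ (-cc + a i) := hψ₀half _ (hdist i hi)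
        have hmi : m i ≤ 0 := by
          by_contra h
          have h0 := hcase i (lt_of_not_ge fun hh => h (by omega))
          rw [h0] at hψh
          linarith
        have habs : |(m i : ℝ)| = -(m i : ℝ) := abs_of_nonpos (by exact_mod_cast hmi)
        rw [habs]
        have hm0 : (0 : ℝ) ≤ -(m i : ℝ) := by
          simp only [neg_nonneg]
          exact_mod_cast hmi
        nlinarith
      calc ∑ i ∈ t, |(m i : ℝ)|
          ≤ ∑ i ∈ t, 2 * ((-(m i : ℝ)) * ψ₀ (-cc + a i)) := Finset.sum_le_sum htf
        _ = 2 * ∑ i ∈ t, (-(m i : ℝ)) * ψ₀ (-cc + a i) := by rw [Finset.mul_sum]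
        _ ≤ 2 * ∑' i, (-(m i : ℝ)) * ψ₀ (-cc + a i) := by
            apply mul_le_mul_of_nonneg_left _ (by norm_num)
            exact hsummable.sum_le_tsum t (fun i _ => hterm i)
        _ ≤ 2 * M0 := by
            apply mul_le_mul_of_nonneg_left _ (by norm_num)
            have heq : ∑' i, (-(m i : ℝ)) * ψ₀ (-cc + a i)
                = -(∑' i, (m i : ℝ) * ψ₀ (-cc + a i)) := by
              rw [← tsum_neg]
              apply tsum_congr
              intro i
              ring
            rw [heq]
            have := hM0 (-cc)
            have h2 := neg_le_abs (∑' i, (m i : ℝ) * ψ₀ (-cc + a i))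
            linarith
    · -- negative masses invisible here, so all masses in t are ≥ 0
      have hterm : ∀ i, 0 ≤ ((m i : ℝ)) * ψ₀ (-cc + a i) := by
        intro i
        rcases lt_trichotomy (m i) 0 with h | h | h
        · rw [hcase i h, mul_zero]
        · simp [h]
        · apply mul_nonneg _ (s16tri_nonneg _)
          exact_mod_cast h.le
      have hsummable : Summable fun i => ((m i : ℝ)) * ψ₀ (-cc + a i) :=
        s16_summable hdisc _ hψ₀s (-cc)
      have htf : ∀ i ∈ t, |(m i : ℝ)| ≤ 2 * (((m i : ℝ)) * ψ₀ (-cc + a i)) := by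
        intro i hi
        have hψh : 1 / 2 ≤ ψ₀ (-cc + a i) := hψ₀half _ (hdist i hi)
        have hmi : 0 ≤ m i := by
          by_contra h
          have h0 := hcase i (lt_of_not_ge fun hh => h (by omega))
          rw [h0] at hψh
          linarith
        have habs : |(m i : ℝ)| = (m i : ℝ) := abs_of_nonneg (by exact_mod_cast hmi)
        rw [habs]
        have hm0 : (0 : ℝ) ≤ (m i : ℝ) := by exact_mod_cast hmi
        nlinarith
      calc ∑ i ∈ t, |(m i : ℝ)|
          ≤ ∑ i ∈ t, 2 * (((m i : ℝ)) * ψ₀ (-cc + a i)) := Finset.sum_le_sum htf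
        _ = 2 * ∑ i ∈ t, ((m i : ℝ)) * ψ₀ (-cc + a i) := by rw [Finset.mul_sum]
        _ ≤ 2 * ∑' i, ((m i : ℝ)) * ψ₀ (-cc + a i) := by
            apply mul_le_mul_of_nonneg_left _ (by norm_num)
            exact hsummable.sum_le_tsum t (fun i _ => hterm i)
        _ ≤ 2 * M0 := by
            apply mul_le_mul_of_nonneg_left _ (by norm_num)
            have := hM0 (-cc)
            have h2 := le_abs_self (∑' i, (m i : ℝ) * ψ₀ (-cc + a i))
            linarith
  -- geometry of the support of φ
  obtain ⟨C0, hC0⟩ := hφs.isBounded.subset_closedBall 0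
  set C : ℝ := max C0 0 with hC
  have hC0' : (0 : ℝ) ≤ C := le_max_right _ _
  have hKC : tsupport φ ⊆ closedBall 0 C :=
    hC0.trans (closedBall_subset_closedBall (le_max_left _ _))
  -- finite cover of the window by d/6-balls
  obtain ⟨cset, _hcs, hcfin, hccov⟩ :=
    (isCompact_closedBall (0 : EuclideanSpace ℝ (Fin p)) (C + 1)).finite_cover_balls
      (show (0 : ℝ) < d / 6 by linarith)
  obtain ⟨csF, hcsF⟩ : ∃ F : Finset (EuclideanSpace ℝ (Fin p)), F = hcfin.toFinset := ⟨_, rfl⟩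
  obtain ⟨N, hNdef⟩ : ∃ N : ℝ, N = (csF.card : ℝ) * (2 * M0) := ⟨_, rfl⟩
  have hN0 : 0 ≤ N := by rw [hNdef]; positivity
  have hN : ∀ (y : EuclideanSpace ℝ (Fin p)) (t : Finset ι),
      (∀ i ∈ t, y + a i ∈ closedBall (0 : EuclideanSpace ℝ (Fin p)) (C + 1)) →
      ∑ i ∈ t, |(m i : ℝ)| ≤ N := by
    intro y t ht
    calc ∑ i ∈ t, |(m i : ℝ)|
        ≤ ∑ i ∈ t, ∑ c ∈ csF, (if dist (a i) (c - y) ≤ d / 6 then |(m i : ℝ)| else 0) := by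
          apply Finset.sum_le_sum
          intro i hi
          obtain ⟨c, hcmem, hcball⟩ : ∃ c ∈ csF, dist (y + a i) c < d / 6 := by
            have hmem := hccov (ht i hi)
            simp only [mem_iUnion] at hmem
            obtain ⟨c, hc1, hc2⟩ := hmem
            exact ⟨c, by rw [hcsF]; exact hcfin.mem_toFinset.2 hc1, mem_ball.1 hc2⟩
          have hci : dist (a i) (c - y) ≤ d / 6 := by
            have heq : dist (y + a i) c = dist (a i) (c - y) := by
              rw [dist_eq_norm, dist_eq_norm]
              congr 1
              abel
            rw [heq] at hcball
            exact hcball.le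
          calc |(m i : ℝ)| = (if dist (a i) (c - y) ≤ d / 6 then |(m i : ℝ)| else 0) := by
                rw [if_pos hci]
            _ ≤ ∑ c' ∈ csF, (if dist (a i) (c' - y) ≤ d / 6 then |(m i : ℝ)| else 0) := by
                apply Finset.single_le_sum
                  (f := fun c' => if dist (a i) (c' - y) ≤ d / 6 then |(m i : ℝ)| else 0) _ hcmem
                intro c' _
                by_cases hcc : dist (a i) (c' - y) ≤ d / 6
                · rw [if_pos hcc]; positivity
                · rw [if_neg hcc]
      _ = ∑ c ∈ csF, ∑ i ∈ t, (if dist (a i) (c - y) ≤ d / 6 then |(m i : ℝ)| else 0) :=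
          Finset.sum_comm
      _ ≤ ∑ _c ∈ csF, 2 * M0 := by
          apply Finset.sum_le_sum
          intro c _
          rw [← Finset.sum_filter]
          exact hball (c - y) _ (fun i hi => (Finset.mem_filter.1 hi).2)
      _ = N := by rw [Finset.sum_const, nsmul_eq_mul, hNdef]
  -- start proving almost periodicity
  intro ε hε
  obtain ⟨ε₁, hε₁def⟩ : ∃ x : ℝ, x = ε / (4 * (N + 1)) := ⟨_, rfl⟩
  have hε₁ : 0 < ε₁ := by rw [hε₁def]; apply div_pos hε; linarith
  have hφu : UniformContinuous φ := hφs.uniformContinuous_of_continuous hφc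
  rw [Metric.uniformContinuous_iff] at hφu
  obtain ⟨δ, hδ, hδs⟩ := hφu ε₁ hε₁
  set s : ℝ := Real.sqrt p with hsdef
  have hs : 0 ≤ s := Real.sqrt_nonneg _
  set r : ℝ := min (δ / 2) (min (d / 3) 1) / (s + 1) with hrdef
  have hminpos : 0 < min (δ / 2) (min (d / 3) 1) :=
    lt_min (by linarith) (lt_min (by linarith) one_pos)
  have hr : 0 < r := div_pos hminpos (by linarith)
  have hrs : r * s + r = min (δ / 2) (min (d / 3) 1) := by
    rw [hrdef]
    field_simp
  have hr1 : r * s < δ := by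
    have := min_le_left (δ / 2) (min (d / 3) 1)
    linarith
  have hr2 : r * s ≤ d / 3 := by
    have h1 := min_le_right (δ / 2) (min (d / 3) 1)
    have h2 := min_le_left (d / 3) (1 : ℝ)
    linarith
  have hr3 : r * s ≤ 1 := by
    have h1 := min_le_right (δ / 2) (min (d / 3) 1)
    have h2 := min_le_right (d / 3) (1 : ℝ)
    linarith
  set ψ : EuclideanSpace ℝ (Fin p) → ℝ := fun z => s16T r z with hψdef
  have hψc : Continuous ψ := s16T_continuous r
  have hψvanish : ∀ z : EuclideanSpace ℝ (Fin p), r * s < ‖z‖ → ψ z = 0 := by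
    intro z hz
    by_contra h
    have := s16T_ne_zero hr h
    rw [← hsdef] at this
    linarith
  have hψs : HasCompactSupport ψ := by
    apply HasCompactSupport.intro (isCompact_closedBall (0 : EuclideanSpace ℝ (Fin p)) (r * s))
    intro z hz
    apply hψvanish
    rw [mem_closedBall, dist_zero_right, not_le] at hz
    exact hz
  have hψsmall : ∀ y : EuclideanSpace ℝ (Fin p), d / 3 < ‖y‖ → ψ y = 0 :=
    fun y hy => hψvanish y (lt_of_le_of_lt hr2 hy)
  have hψnonneg : ∀ z, 0 ≤ ψ z := fun z => s16T_nonneg r z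
  -- the positive part of the ψ-sum is a max
  set P : EuclideanSpace ℝ (Fin p) → ℝ := fun w => ∑' i, mp i * ψ (w + a i) with hPdef
  have hmax : ∀ w, P w = max (∑' i, (m i : ℝ) * ψ (w + a i)) 0 := by
    intro w
    rcases hsign ψ hψsmall w with hcase | hcase
    · have hPw : P w = 0 := by
        rw [hPdef]
        have hz : ∀ i, mp i * ψ (w + a i) = 0 := by
          intro i
          by_cases h : 0 < m i
          · rw [hcase i h, mul_zero]
          · rw [hmp]
            simp [h]
        simp only [hz]
        exact tsum_zero
      have hF : (∑' i, (m i : ℝ) * ψ (w + a i)) ≤ 0 := by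
        apply tsum_nonpos
        intro i
        rcases lt_trichotomy (m i) 0 with h | h | h
        · apply mul_nonpos_of_nonpos_of_nonneg _ (hψnonneg _)
          exact_mod_cast h.le
        · simp [h]
        · rw [hcase i h, mul_zero]
      rw [hPw, max_eq_right hF]
    · have hcongr : ∀ i, mp i * ψ (w + a i) = (m i : ℝ) * ψ (w + a i) := by
        intro i
        rcases lt_trichotomy (m i) 0 with h | h | h
        · rw [hcase i h, mul_zero, mul_zero]
        · rw [hmp]; simp [h]
        · rw [hmp]; simp [h]
      have hF : 0 ≤ (∑' i, (m i : ℝ) * ψ (w + a i)) := by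
        apply tsum_nonneg
        intro i
        rcases lt_trichotomy (m i) 0 with h | h | h
        · rw [hcase i h, mul_zero]
        · simp [h]
        · apply mul_nonneg _ (hψnonneg _)
          exact_mod_cast h.le
      rw [hPdef]
      simp only [hcongr]
      rw [max_eq_left hF]
  -- grid setup
  set L : ℤ := ⌈(C + 1) / r⌉ + 1 with hLdef
  set B := Fintype.piFinset fun _ : Fin p => Finset.Icc (-L) L with hBdef
  have hfloor : ∀ z : EuclideanSpace ℝ (Fin p), ‖z‖ ≤ C + 1 →
      ∀ j, -L ≤ ⌊z j / r⌋ ∧ ⌊z j / r⌋ + 1 ≤ L := by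
    intro z hz j
    have h1 := abs_le.1 ((s16_coord_abs_le_norm z j).trans hz)
    have hceil := Int.le_ceil ((C + 1) / r)
    have h2 : z j / r ≤ (C + 1) / r := (div_le_div_iff_of_pos_right hr).2 h1.2
    have h3 : -((C + 1) / r) ≤ z j / r := by
      have := (div_le_div_iff_of_pos_right hr).2 h1.1
      rwa [neg_div] at this
    constructor
    · rw [Int.le_floor, hLdef]
      push_cast
      linarith
    · have h4 : ⌊z j / r⌋ < L := by
        rw [Int.floor_lt, hLdef]
        push_cast
        linarith
      omega
  set φt : EuclideanSpace ℝ (Fin p) → ℝ :=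
    fun z => ∑ k ∈ B, φ (s16grid r k) * s16T r (z - s16grid r k) with hφt
  have htermb : ∀ (z : EuclideanSpace ℝ (Fin p)) (k : Fin p → ℤ),
      |φ z - φ (s16grid r k)| * s16T r (z - s16grid r k)
        ≤ ε₁ * s16T r (z - s16grid r k) := by
    intro z k
    by_cases hT : s16T r (z - s16grid r k) = 0
    · rw [hT, mul_zero, mul_zero]
    · apply mul_le_mul_of_nonneg_right _ (s16T_nonneg _ _)
      have hnorm : ‖z - s16grid r k‖ ≤ r * s := by
        have := s16T_ne_zero hr hT
        rwa [← hsdef] at this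
      have hdd : dist z (s16grid r k) < δ := by
        rw [dist_eq_norm]
        linarith
      have := hδs hdd
      rw [Real.dist_eq] at this
      exact this.le
  have happrox : ∀ z, |φ z - φt z| ≤ ε₁ := by
    intro z
    by_cases hz : z ∈ tsupport φ
    · have hz1 : ‖z‖ ≤ C + 1 := by
        have := hKC hz
        rw [mem_closedBall, dist_zero_right] at this
        linarith
      have hsum1 : ∑ k ∈ B, s16T r (z - s16grid r k) = 1 := by
        rw [hBdef]
        exact s16_sumT_eq hr L z (hfloor z hz1)
      have hdiff : φ z - φt z
          = ∑ k ∈ B, (φ z - φ (s16grid r k)) * s16T r (z - s16grid r k) := by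
        rw [hφt]
        rw [Finset.sum_congr rfl fun k _ =>
          sub_mul (φ z) (φ (s16grid r k)) (s16T r (z - s16grid r k))]
        rw [Finset.sum_sub_distrib, ← Finset.mul_sum, hsum1, mul_one]
      rw [hdiff]
      calc |∑ k ∈ B, (φ z - φ (s16grid r k)) * s16T r (z - s16grid r k)|
          ≤ ∑ k ∈ B, |(φ z - φ (s16grid r k)) * s16T r (z - s16grid r k)| :=
            Finset.abs_sum_le_sum_abs _ _
        _ = ∑ k ∈ B, |φ z - φ (s16grid r k)| * s16T r (z - s16grid r k) := by
            apply Finset.sum_congr rfl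
            intro k _
            rw [abs_mul, abs_of_nonneg (s16T_nonneg _ _)]
        _ ≤ ∑ k ∈ B, ε₁ * s16T r (z - s16grid r k) := Finset.sum_le_sum fun k _ => htermb z k
        _ = ε₁ * ∑ k ∈ B, s16T r (z - s16grid r k) := by rw [Finset.mul_sum]
        _ = ε₁ := by rw [hsum1, mul_one]
    · have hφz : φ z = 0 := image_eq_zero_of_notMem_tsupport hz
      rw [hφz, zero_sub, abs_neg, hφt]
      calc |∑ k ∈ B, φ (s16grid r k) * s16T r (z - s16grid r k)|
          ≤ ∑ k ∈ B, |φ (s16grid r k) * s16T r (z - s16grid r k)| :=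
            Finset.abs_sum_le_sum_abs _ _
        _ = ∑ k ∈ B, |φ z - φ (s16grid r k)| * s16T r (z - s16grid r k) := by
            apply Finset.sum_congr rfl
            intro k _
            rw [hφz, zero_sub, abs_neg, abs_mul, abs_of_nonneg (s16T_nonneg _ _)]
        _ ≤ ∑ k ∈ B, ε₁ * s16T r (z - s16grid r k) := Finset.sum_le_sum fun k _ => htermb z k
        _ = ε₁ * ∑ k ∈ B, s16T r (z - s16grid r k) := by rw [Finset.mul_sum]
        _ ≤ ε₁ * 1 := mul_le_mul_of_nonneg_left (s16_sumT_le hr B z) hε₁.le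
        _ = ε₁ := mul_one _
  have hφvanish : ∀ z : EuclideanSpace ℝ (Fin p),
      z ∉ closedBall (0 : EuclideanSpace ℝ (Fin p)) (C + 1) → φ z = 0 := by
    intro z hz
    rw [mem_closedBall, dist_zero_right, not_le] at hz
    apply image_eq_zero_of_notMem_tsupport
    intro hmem
    have := hKC hmem
    rw [mem_closedBall, dist_zero_right] at this
    linarith
  have hfinc : ∀ y : EuclideanSpace ℝ (Fin p),
      {i | y + a i ∈ closedBall (0 : EuclideanSpace ℝ (Fin p)) (C + 1)}.Finite :=
    fun y => s16_finwin hdisc (isCompact_closedBall _ _) y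
  have hgsum : ∀ y : EuclideanSpace ℝ (Fin p),
      (∑' i, mp i * φ (y + a i)) = ∑ i ∈ (hfinc y).toFinset, mp i * φ (y + a i) := by
    intro y
    apply tsum_eq_sum
    intro i hi
    have hni : y + a i ∉ closedBall (0 : EuclideanSpace ℝ (Fin p)) (C + 1) := by
      intro hmem
      exact hi ((hfinc y).mem_toFinset.2 hmem)
    rw [hφvanish _ hni, mul_zero]
  have hkey : ∀ y : EuclideanSpace ℝ (Fin p),
      |(∑' i, mp i * φ (y + a i)) - ∑ k ∈ B, φ (s16grid r k) * P (y - s16grid r k)|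
        ≤ ε₁ * N := by
    intro y
    have hstep1 : ∀ k ∈ B, φ (s16grid r k) * P (y - s16grid r k)
        = ∑ i ∈ (hfinc y).toFinset,
            mp i * (φ (s16grid r k) * s16T r ((y + a i) - s16grid r k)) := by
      intro k _
      simp only [hPdef]
      rw [← tsum_mul_left]
      have hc1 : ∀ i, φ (s16grid r k) * (mp i * ψ ((y - s16grid r k) + a i))
          = mp i * (φ (s16grid r k) * s16T r ((y + a i) - s16grid r k)) := by
        intro i
        have harg : (y - s16grid r k) + a i = (y + a i) - s16grid r k := by abel
        rw [harg]
        simp only [hψdef]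
        ring
      rw [tsum_congr hc1]
      apply tsum_eq_sum
      intro i hi
      have hni : y + a i ∉ closedBall (0 : EuclideanSpace ℝ (Fin p)) (C + 1) := by
        intro hmem
        exact hi ((hfinc y).mem_toFinset.2 hmem)
      by_cases hφg : φ (s16grid r k) = 0
      · rw [hφg, zero_mul, mul_zero]
      · by_cases hT : s16T r ((y + a i) - s16grid r k) = 0
        · rw [hT, mul_zero, mul_zero]
        · exfalso
          apply hni
          rw [mem_closedBall, dist_zero_right]
          have hgk : ‖s16grid r k‖ ≤ C := by
            have hmem2 := hKC (subset_tsupport φ (Function.mem_support.2 hφg))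
            rw [mem_closedBall, dist_zero_right] at hmem2
            exact hmem2
          have hzg : ‖(y + a i) - s16grid r k‖ ≤ r * s := by
            have := s16T_ne_zero hr hT
            rwa [← hsdef] at this
          have hcanc : ((y + a i) - s16grid r k) + s16grid r k = y + a i := by abel
          calc ‖y + a i‖ = ‖((y + a i) - s16grid r k) + s16grid r k‖ := by rw [hcanc]
            _ ≤ ‖(y + a i) - s16grid r k‖ + ‖s16grid r k‖ := norm_add_le _ _
            _ ≤ C + 1 := by linarith
    have hstep2 : ∑ k ∈ B, φ (s16grid r k) * P (y - s16grid r k)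
        = ∑ i ∈ (hfinc y).toFinset, mp i * φt (y + a i) := by
      rw [Finset.sum_congr rfl hstep1, Finset.sum_comm]
      apply Finset.sum_congr rfl
      intro i _
      simp only [hφt]
      rw [Finset.mul_sum]
    rw [hgsum y, hstep2, ← Finset.sum_sub_distrib]
    rw [Finset.sum_congr rfl fun i _ => (mul_sub (mp i) (φ (y + a i)) (φt (y + a i))).symm]
    calc |∑ i ∈ (hfinc y).toFinset, mp i * (φ (y + a i) - φt (y + a i))|
        ≤ ∑ i ∈ (hfinc y).toFinset, |mp i * (φ (y + a i) - φt (y + a i))| :=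
          Finset.abs_sum_le_sum_abs _ _
      _ ≤ ∑ i ∈ (hfinc y).toFinset, |(m i : ℝ)| * ε₁ := by
          apply Finset.sum_le_sum
          intro i _
          rw [abs_mul]
          exact mul_le_mul (hmp_abs i) (happrox _) (abs_nonneg _) (abs_nonneg _)
      _ = (∑ i ∈ (hfinc y).toFinset, |(m i : ℝ)|) * ε₁ := by rw [Finset.sum_mul]
      _ ≤ N * ε₁ := by
          apply mul_le_mul_of_nonneg_right _ hε₁.le
          apply hN y
          intro i hi
          exact (hfinc y).mem_toFinset.1 hi
      _ = ε₁ * N := mul_comm _ _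
  -- conclusion
  obtain ⟨C', hC'def⟩ : ∃ x : ℝ, x = ∑ k ∈ B, |φ (s16grid r k)| := ⟨_, rfl⟩
  have hC'0 : 0 ≤ C' := by rw [hC'def]; exact Finset.sum_nonneg fun k _ => abs_nonneg _
  obtain ⟨ε₂, hε₂def⟩ : ∃ x : ℝ, x = ε / (2 * (C' + 1)) := ⟨_, rfl⟩
  have hε₂ : 0 < ε₂ := by rw [hε₂def]; apply div_pos hε; linarith
  obtain ⟨R, hR, hRc⟩ := hap ψ hψc hψs ε₂ hε₂
  refine ⟨R, hR, fun cc => ?_⟩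
  obtain ⟨τ, hτS, hτd⟩ := hRc cc
  refine ⟨τ, fun x => ?_, hτd⟩
  show |(∑' i, mp i * φ ((x + τ) + a i)) - (∑' i, mp i * φ (x + a i))| < ε
  have hPτ : ∀ w, |P (w + τ) - P w| ≤ ε₂ := by
    intro w
    have h1 := hτS w
    rw [hmax (w + τ), hmax w]
    exact (abs_max_sub_max_le_abs _ _ _).trans h1.le
  have hmid : |(∑ k ∈ B, φ (s16grid r k) * P ((x + τ) - s16grid r k))
      - ∑ k ∈ B, φ (s16grid r k) * P (x - s16grid r k)| ≤ C' * ε₂ := by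
    rw [← Finset.sum_sub_distrib]
    calc |∑ k ∈ B, (φ (s16grid r k) * P ((x + τ) - s16grid r k)
          - φ (s16grid r k) * P (x - s16grid r k))|
        ≤ ∑ k ∈ B, |φ (s16grid r k) * P ((x + τ) - s16grid r k)
          - φ (s16grid r k) * P (x - s16grid r k)| := Finset.abs_sum_le_sum_abs _ _
      _ ≤ ∑ k ∈ B, |φ (s16grid r k)| * ε₂ := by
          apply Finset.sum_le_sum
          intro k _
          rw [← mul_sub, abs_mul]
          apply mul_le_mul_of_nonneg_left _ (abs_nonneg _)
          have harg : (x + τ) - s16grid r k = (x - s16grid r k) + τ := by abel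
          rw [harg]
          exact hPτ (x - s16grid r k)
      _ = C' * ε₂ := by rw [← Finset.sum_mul, hC'def]
  have h1 := hkey (x + τ)
  have h2 := hkey x
  have htri1 := abs_sub_le (∑' i, mp i * φ ((x + τ) + a i))
    (∑ k ∈ B, φ (s16grid r k) * P ((x + τ) - s16grid r k))
    (∑' i, mp i * φ (x + a i))
  have htri2 := abs_sub_le (∑ k ∈ B, φ (s16grid r k) * P ((x + τ) - s16grid r k))
    (∑ k ∈ B, φ (s16grid r k) * P (x - s16grid r k))
    (∑' i, mp i * φ (x + a i))
  have h2' : |(∑ k ∈ B, φ (s16grid r k) * P (x - s16grid r k)) - ∑' i, mp i * φ (x + a i)|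
      ≤ ε₁ * N := by
    rw [abs_sub_comm]
    exact h2
  have e1 : ε₁ * N ≤ ε / 4 := by
    have hN1 : (0:ℝ) < N + 1 := by linarith
    have he : ε₁ * (N + 1) = ε / 4 := by
      calc ε₁ * (N + 1) = ε * (N + 1) / (4 * (N + 1)) := by rw [hε₁def]; ring
        _ = ε / 4 := mul_div_mul_right _ _ (ne_of_gt hN1)
    have hmono : ε₁ * N ≤ ε₁ * (N + 1) :=
      mul_le_mul_of_nonneg_left (by linarith) hε₁.le
    linarith
  have e2 : C' * ε₂ < ε / 2 := by
    have hC1 : (0:ℝ) < C' + 1 := by linarith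
    have he : ε₂ * (C' + 1) = ε / 2 := by
      calc ε₂ * (C' + 1) = ε * (C' + 1) / (2 * (C' + 1)) := by rw [hε₂def]; ring
        _ = ε / 2 := mul_div_mul_right _ _ (ne_of_gt hC1)
    have hmono : C' * ε₂ < (C' + 1) * ε₂ :=
      mul_lt_mul_of_pos_right (lt_add_one C') hε₂
    have hcomm : (C' + 1) * ε₂ = ε₂ * (C' + 1) := mul_comm _ _
    linarith
  linarith


/-- if the positive and negative parts of a signed almost periodic multiple
discrete set are at positive distance from each other, then both parts are (positive)
almost periodic multiple discrete sets. -/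
theorem statement16 {p : ℕ} {ι : Type*} (a : ι → EuclideanSpace ℝ (Fin p)) (m : ι → ℤ)
    (ha : Function.Injective a) (hm : ∀ i, m i ≠ 0)
    (hdisc : ∀ K : Set (EuclideanSpace ℝ (Fin p)), IsCompact K → (a ⁻¹' K).Finite)
    (hap : ∀ φ : EuclideanSpace ℝ (Fin p) → ℝ, Continuous φ → HasCompactSupport φ →
      AlmostPeriodic fun x => ∑' i, (m i : ℝ) * φ (x + a i))
    (d : ℝ) (hd : 0 < d)
    (hsep : ∀ i j, 0 < m i → m j < 0 → d ≤ dist (a i) (a j)) :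
    (∀ φ : EuclideanSpace ℝ (Fin p) → ℝ, Continuous φ → HasCompactSupport φ →
      AlmostPeriodic fun x => ∑' i, (if 0 < m i then (m i : ℝ) else 0) * φ (x + a i)) ∧
    ∀ φ : EuclideanSpace ℝ (Fin p) → ℝ, Continuous φ → HasCompactSupport φ →
      AlmostPeriodic fun x => ∑' i, (if m i < 0 then -(m i : ℝ) else 0) * φ (x + a i) := by
  constructor
  · exact s16_main a m hdisc hap d hd hsep
  · have hap' : ∀ φ : EuclideanSpace ℝ (Fin p) → ℝ, Continuous φ → HasCompactSupport φ →
        AlmostPeriodic fun x => ∑' i, (((-m) i : ℤ) : ℝ) * φ (x + a i) := by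
      intro φ hφc hφs ε hε
      refine RelativelyDense.mono ?_ (hap φ hφc hφs ε hε)
      intro τ hτ x
      have h1 := hτ x
      have he : ∀ y : EuclideanSpace ℝ (Fin p),
          (∑' i, (((-m) i : ℤ) : ℝ) * φ (y + a i))
            = -(∑' i, ((m i : ℤ) : ℝ) * φ (y + a i)) := by
        intro y
        rw [← tsum_neg]
        apply tsum_congr
        intro i
        simp only [Pi.neg_apply]
        push_cast
        ring
      show |(∑' i, (((-m) i : ℤ) : ℝ) * φ (x + τ + a i))
        - ∑' i, (((-m) i : ℤ) : ℝ) * φ (x + a i)| < ε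
      rw [he, he, neg_sub_neg, abs_sub_comm]
      exact h1
    have hsep' : ∀ i j, 0 < (-m) i → (-m) j < 0 → d ≤ dist (a i) (a j) := by
      intro i j hi hj
      rw [dist_comm]
      apply hsep j i
      · have : -(m j) < 0 := hj
        omega
      · have : 0 < -(m i) := hi
        omega
    intro φ hφc hφs
    have h := s16_main a (-m) hdisc hap' d hd hsep' φ hφc hφs
    have hcong : (fun x => ∑' i, (if 0 < (-m) i then (((-m) i : ℤ) : ℝ) else 0) * φ (x + a i))
        = fun x => ∑' i, (if m i < 0 then -(m i : ℝ) else 0) * φ (x + a i) := by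
      funext x
      apply tsum_congr
      intro i
      congr 1
      by_cases hmi : m i < 0
      · rw [if_pos (show 0 < (-m) i by simpa using hmi), if_pos hmi]
        simp only [Pi.neg_apply]
        push_cast
        ring
      · rw [if_neg (show ¬ 0 < (-m) i by simpa using hmi), if_neg hmi]
    rwa [hcong] at h
end

section
/- Let a_n^+ = n + 1/(α(n)+1)^2 for even nonzero n, with α(n) the 2-adic valuation of n, and A^+ = {a_n^+ : n ∈ 2ℤ\{0}}. Then for ε < 1/4, the set A^+ has no ε-almost periods τ with |τ| > 1 in the bijective sense; consequently A^+ is not an almost periodic discrete set. -/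
open Metric Set MeasureTheory

lemma one_le_alphaVal (n : EvenNZ) : 1 ≤ alphaVal n := by
  obtain ⟨n, hn0, hdvd⟩ := n
  unfold alphaVal padicValInt
  exact one_le_padicValNat_of_dvd (Int.natAbs_ne_zero.mpr hn0)
    (Int.natAbs_dvd_natAbs.mpr hdvd)

lemma frac_pos (n : EvenNZ) : 0 < 1 / ((alphaVal n : ℝ) + 1) ^ 2 := by positivity

lemma frac_le (n : EvenNZ) : 1 / ((alphaVal n : ℝ) + 1) ^ 2 ≤ 1 / 4 := by
  have h1 : (1 : ℝ) ≤ (alphaVal n : ℝ) := by exact_mod_cast one_le_alphaVal n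
  rw [div_le_div_iff₀ (by positivity) (by norm_num)]
  nlinarith

/-- for `ε < 1/4` the set `A⁺ = (a_n^+)` has no ε-almost periods `τ` with
`|τ| > 1` (in the bijective sense); consequently `A⁺` is not almost periodic. -/
theorem statement17 :
    (∀ ε : ℝ, 0 < ε → ε < 1 / 4 → ∀ τ : ℝ, 1 < |τ| →
      ¬ ∃ σ : EvenNZ ≃ EvenNZ, ∀ n : EvenNZ, |aplus n + τ - aplus (σ n)| < ε) ∧
    ¬ (∀ ε : ℝ, 0 < ε → RelativelyDense {τ : ℝ |
        ∃ σ : EvenNZ ≃ EvenNZ, ∀ n : EvenNZ, |aplus n + τ - aplus (σ n)| < ε}) := by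
  have key : ∀ ε : ℝ, 0 < ε → ε < 1 / 4 → ∀ τ : ℝ, 1 < |τ| →
      ¬ ∃ σ : EvenNZ ≃ EvenNZ, ∀ n : EvenNZ, |aplus n + τ - aplus (σ n)| < ε := by
    rintro ε hε hε4 τ hτ ⟨σ, hσ⟩
    -- the integer shift at each index is within ε + 1/4 of τ
    have hd : ∀ n : EvenNZ, |(((σ n).1 : ℝ) - (n.1 : ℝ)) - τ| < ε + 1 / 4 := by
      intro n
      have h := hσ n
      have hb1 := frac_pos n; have hb2 := frac_le n
      have hb3 := frac_pos (σ n); have hb4 := frac_le (σ n)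
      simp only [aplus] at h
      rw [abs_lt] at h ⊢
      constructor <;> nlinarith [abs_nonneg (aplus n + τ - aplus (σ n))]
    -- the shift is the same for all indices
    have hconst : ∀ n n' : EvenNZ, (σ n).1 - n.1 = (σ n').1 - n'.1 := by
      intro n n'
      have h1 := hd n; have h2 := hd n'
      rw [abs_lt] at h1 h2
      have : |(((σ n).1 - n.1 : ℤ) : ℝ) - (((σ n').1 - n'.1 : ℤ) : ℝ)| < 1 := by
        push_cast
        rw [abs_lt]; constructor <;> nlinarith
      have h3 : |((σ n).1 - n.1) - ((σ n').1 - n'.1)| < 1 := by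
        exact_mod_cast (by push_cast at this ⊢; convert this using 2 <;> push_cast <;> ring :
          |((((σ n).1 - n.1) - ((σ n').1 - n'.1) : ℤ) : ℝ)| < 1)
      have h4 := Int.abs_lt_one_iff.mp h3
      omega
    set n₀ : EvenNZ := ⟨2, by norm_num⟩ with hn₀
    set m : ℤ := (σ n₀).1 - n₀.1 with hm
    have hmne : m ≠ 0 := by
      intro h0
      have := hd n₀
      rw [hn₀] at this
      rw [show ((σ n₀).1 : ℝ) - ((2 : ℤ) : ℝ) = (m : ℝ) by push_cast [hm, hn₀]; ring] at this
      rw [h0] at this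
      simp at this
      rw [abs_lt] at this
      rw [lt_abs] at hτ
      rcases hτ with h | h <;> [nlinarith; (rw [lt_neg] at h; nlinarith)]
    have hmdvd : (2 : ℤ) ∣ m := by
      rw [hm]
      exact dvd_sub (σ n₀).2.2 n₀.2.2
    set e : EvenNZ := ⟨-m, neg_ne_zero.mpr hmne, (dvd_neg).mpr hmdvd⟩ with he
    have h1 : (σ e).1 - e.1 = m := (hconst e n₀).trans hm.symm
    have h1' : (σ e).1 - (-m) = m := h1
    have h2 : (σ e).1 = 0 := by omega
    exact (σ e).2.1 h2
  refine ⟨key, ?_⟩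
  intro h
  obtain ⟨R, hR, hball⟩ := h (1 / 8) (by norm_num)
  obtain ⟨τ, hτS, hdist⟩ := hball (R + 2)
  have hτ : 1 < |τ| := by
    rw [Real.dist_eq, abs_lt] at hdist
    rw [lt_abs]
    left; linarith
  exact key (1 / 8) (by norm_num) (by norm_num) τ hτ hτS
end

section
/- There exists a signed almost periodic multiple discrete set A in ℝ such that neither A^+ nor A^− is an almost periodic multiple discrete set. Explicitly, A with mass +1 at a_n^+ = n + 1/(α(n)+1)^2 and mass −1 at a_n^− = n − 1/(α(n)+1)^2 for each even nonzero n (α the 2-adic valuation) is almost periodic, but A^+ and A^− are not. -/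
open Metric Set MeasureTheory

/-! ### Auxiliary material -/

section Aux

lemma padic_le {L : ℕ} {n : ℤ} (hn : n ≠ 0) (h : (2:ℤ)^L ∣ n) : L ≤ padicValInt 2 n := by
  have h' : ((2:ℕ):ℤ)^L ∣ n := by exact_mod_cast h
  rcases (padicValInt_dvd_iff (p := 2) L n).mp h' with h0 | hle
  · exact absurd h0 hn
  · exact hle

lemma padic_dvd {L : ℕ} {n : ℤ} (h : L ≤ padicValInt 2 n) : (2:ℤ)^L ∣ n := by
  have := (padicValInt_dvd_iff (p := 2) L n).mpr (Or.inr h)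
  exact_mod_cast this

/-- the extended offset function on all of `ℤ`. -/
noncomputable def epsZ (n : ℤ) : ℝ :=
  if n ≠ 0 ∧ (2:ℤ) ∣ n then 1 / ((padicValInt 2 n : ℝ) + 1) ^ 2 else 0

lemma epsZ_nonneg (n : ℤ) : 0 ≤ epsZ n := by
  unfold epsZ; split
  · positivity
  · exact le_rfl

lemma one_le_alpha_s18 {n : ℤ} (hn : n ≠ 0 ∧ (2:ℤ) ∣ n) : 1 ≤ padicValInt 2 n := by
  apply padic_le hn.1
  simpa using hn.2

lemma epsZ_le_quarter (n : ℤ) : epsZ n ≤ 1/4 := by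
  unfold epsZ; split
  · rename_i h
    have h1 : 1 ≤ padicValInt 2 n := one_le_alpha_s18 h
    have h2 : (2:ℝ) ≤ (padicValInt 2 n : ℝ) + 1 := by
      have : (1:ℝ) ≤ (padicValInt 2 n : ℝ) := by exact_mod_cast h1
      linarith
    rw [div_le_div_iff₀ (by positivity) (by norm_num)]
    nlinarith
  · norm_num

lemma epsZ_le_of_dvd {L : ℕ} (hL : 1 ≤ L) {z : ℤ} (hz : (2:ℤ)^L ∣ z) :
    epsZ z ≤ 1 / ((L:ℝ) + 1) ^ 2 := by
  by_cases h0 : z = 0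
  · subst h0
    have h : epsZ 0 = 0 := by unfold epsZ; simp
    rw [h]; positivity
  · have h2 : (2:ℤ) ∣ z := dvd_trans (dvd_pow_self 2 (by omega)) hz
    have hv : L ≤ padicValInt 2 z := padic_le h0 hz
    have he : epsZ z = 1 / ((padicValInt 2 z : ℝ) + 1) ^ 2 := by
      unfold epsZ; rw [if_pos ⟨h0, h2⟩]
    rw [he]
    have hle : (L:ℝ) + 1 ≤ (padicValInt 2 z : ℝ) + 1 := by
      have : (L:ℝ) ≤ (padicValInt 2 z : ℝ) := by exact_mod_cast hv
      linarith
    rw [div_le_div_iff₀ (by positivity) (by positivity)]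
    nlinarith

/-- Key arithmetic lemma: shifting by a multiple of `2^L` changes `epsZ` by at most
`1/(L+1)^2`. -/
lemma epsZ_shift {L : ℕ} (hL : 1 ≤ L) {t : ℤ} (ht : (2:ℤ)^L ∣ t) (n : ℤ) :
    |epsZ (n - t) - epsZ n| ≤ 1 / ((L:ℝ) + 1) ^ 2 := by
  have ht2 : (2:ℤ) ∣ t := dvd_trans (dvd_pow_self 2 (by omega)) ht
  by_cases h2 : (2:ℤ) ∣ n
  · by_cases hv : n ≠ 0 ∧ padicValInt 2 n < L
    · obtain ⟨h0, hvL⟩ := hv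
      set v := padicValInt 2 n with hvdef
      have hvd : (2:ℤ)^v ∣ n := padic_dvd le_rfl
      have hndvd : ¬ (2:ℤ)^(v+1) ∣ n := by
        intro hd
        have := padic_le h0 hd
        omega
      have hd1t : (2:ℤ)^v ∣ t := dvd_trans (pow_dvd_pow 2 hvL.le) ht
      have hd2t : (2:ℤ)^(v+1) ∣ t := dvd_trans (pow_dvd_pow 2 (by omega)) ht
      have hnt0 : n - t ≠ 0 := by
        intro e
        have hnt : n = t := by omega
        exact hndvd (hnt ▸ hd2t)
      have hd1 : (2:ℤ)^v ∣ n - t := dvd_sub hvd hd1t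
      have hd2 : ¬ (2:ℤ)^(v+1) ∣ (n - t) := by
        intro hd
        apply hndvd
        have h : n = (n - t) + t := by ring
        rw [h]
        exact dvd_add hd hd2t
      have hval : padicValInt 2 (n - t) = v := by
        have hle : v ≤ padicValInt 2 (n - t) := padic_le hnt0 hd1
        have hge : padicValInt 2 (n - t) ≤ v := by
          by_contra hlt
          push_neg at hlt
          exact hd2 (padic_dvd (by omega))
        omega
      have heq : epsZ (n - t) = epsZ n := by
        unfold epsZ
        rw [if_pos ⟨hnt0, dvd_sub h2 ht2⟩, if_pos ⟨h0, h2⟩, hval]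
      rw [heq, sub_self, abs_zero]
      positivity
    · -- both values are at most the bound
      have hdn : (2:ℤ)^L ∣ n := by
        by_cases h0 : n = 0
        · subst h0; exact dvd_zero _
        · push_neg at hv
          exact padic_dvd (hv h0)
      have hb1 : epsZ n ≤ 1 / ((L:ℝ) + 1) ^ 2 := epsZ_le_of_dvd hL hdn
      have hb2 : epsZ (n - t) ≤ 1 / ((L:ℝ) + 1) ^ 2 := epsZ_le_of_dvd hL (dvd_sub hdn ht)
      rw [abs_sub_le_iff]
      constructor <;> linarith [epsZ_nonneg n, epsZ_nonneg (n - t)]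
  · -- n odd
    have h2' : ¬ (2:ℤ) ∣ (n - t) := by
      intro hd
      apply h2
      have h : n = (n - t) + t := by ring
      rw [h]
      exact dvd_add hd ht2
    have he1 : epsZ n = 0 := by unfold epsZ; rw [if_neg (by tauto)]
    have he2 : epsZ (n - t) = 0 := by unfold epsZ; rw [if_neg (by tauto)]
    rw [he1, he2, sub_self, abs_zero]
    positivity

/-- The summand, extended to all of `ℤ`. -/
noncomputable def termF (φ : ℝ → ℝ) (x : ℝ) (n : ℤ) : ℝ :=
  φ (x + (n:ℝ) + epsZ n) - φ (x + (n:ℝ) - epsZ n)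

lemma abs_sub' (a b : ℝ) : |a - b| ≤ |a| + |b| := by
  calc |a - b| = |a + -b| := by rw [sub_eq_add_neg]
  _ ≤ |a| + |-b| := abs_add_le _ _
  _ = |a| + |b| := by rw [abs_neg]

lemma key_rw (φ : ℝ → ℝ) (x : ℝ) :
    ∑' n : EvenNZ, (φ (x + aplus n) - φ (x + aminus n)) = ∑' n : ℤ, termF φ x n := by
  have h1 : ∀ n : EvenNZ, φ (x + aplus n) - φ (x + aminus n) = termF φ x n.1 := by
    intro n
    have he : epsZ n.1 = 1 / ((alphaVal n : ℝ) + 1) ^ 2 := by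
      unfold epsZ alphaVal
      rw [if_pos n.2]
    unfold termF aplus aminus
    rw [he, ← add_sub_assoc, ← add_assoc]
  calc ∑' n : EvenNZ, (φ (x + aplus n) - φ (x + aminus n))
      = ∑' n : EvenNZ, termF φ x n.1 := tsum_congr h1
    _ = ∑' n : ↑{m : ℤ | m ≠ 0 ∧ (2:ℤ) ∣ m}, termF φ x n.1 := rfl
    _ = ∑' n : ℤ, Set.indicator {m : ℤ | m ≠ 0 ∧ (2:ℤ) ∣ m} (termF φ x) n :=
        tsum_subtype _ _
    _ = ∑' n : ℤ, termF φ x n := by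
        apply tsum_congr
        intro n
        by_cases hn : n ≠ 0 ∧ (2:ℤ) ∣ n
        · exact Set.indicator_of_mem (show n ∈ {m : ℤ | m ≠ 0 ∧ (2:ℤ) ∣ m} from hn) _
        · rw [Set.indicator_of_notMem (show n ∉ {m : ℤ | m ≠ 0 ∧ (2:ℤ) ∣ m} from hn)]
          unfold termF epsZ
          rw [if_neg hn]
          simp

lemma part1 (φ : ℝ → ℝ) (hc : Continuous φ) (hs : HasCompactSupport φ) :
    AlmostPeriodic fun x => ∑' n : EvenNZ, (φ (x + aplus n) - φ (x + aminus n)) := by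
  have hrw : (fun x => ∑' n : EvenNZ, (φ (x + aplus n) - φ (x + aminus n)))
      = fun x => ∑' n : ℤ, termF φ x n := funext (key_rw φ)
  rw [hrw]
  intro ε hε
  -- radius of the support
  obtain ⟨M, hM⟩ := hs.isBounded.subset_closedBall 0
  set M₁ : ℝ := |M| + 1 with hM₁def
  have hM₁ : ∀ u : ℝ, M₁ ≤ |u| → φ u = 0 := by
    intro u hu
    apply image_eq_zero_of_notMem_tsupport
    intro hmem
    have h1 := hM hmem
    rw [Metric.mem_closedBall, Real.dist_eq, sub_zero] at h1
    have := le_abs_self M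
    simp only [hM₁def] at hu
    linarith
  have hM₁pos : 0 < M₁ := by positivity
  -- number of relevant terms
  obtain ⟨Nb, hNb⟩ := exists_nat_gt (2 * M₁ + 3)
  set ε' : ℝ := ε / (2 * Nb + 2) with hε'def
  have hε' : 0 < ε' := by positivity
  -- uniform continuity
  obtain ⟨δ, hδ, hδ'⟩ :=
    Metric.uniformContinuous_iff.mp (hs.uniformContinuous_of_continuous hc) ε' hε'
  -- the scale L
  obtain ⟨L, hLgt⟩ := exists_nat_gt (1/δ)
  have hLpos : (0:ℝ) < L := lt_trans (by positivity) hLgt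
  have hL1 : 1 ≤ L := by
    by_contra hcon
    have : L = 0 := by omega
    rw [this] at hLpos
    norm_num at hLpos
  have hLb : 1 / ((L:ℝ) + 1) ^ 2 < δ := by
    have h1 : 1 < (L:ℝ) * δ := by
      rw [div_lt_iff₀ hδ] at hLgt
      linarith
    have h2 : (L:ℝ) ≤ ((L:ℝ) + 1) ^ 2 := by nlinarith
    have h3 : 1 / ((L:ℝ) + 1) ^ 2 ≤ 1 / (L:ℝ) := one_div_le_one_div_of_le hLpos h2
    have h4 : 1 / (L:ℝ) < δ := by
      rw [div_lt_iff₀ hLpos]; linarith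
    linarith
  have h2Lpos : (0:ℝ) < 2 ^ L := by positivity
  refine ⟨2 ^ L + 1, by positivity, ?_⟩
  intro c
  set t : ℤ := 2 ^ L * ⌊c / 2 ^ L⌋ with htdef
  have ht : (2:ℤ)^L ∣ t := Dvd.intro _ rfl
  refine ⟨(t:ℝ), ?_, ?_⟩
  · -- τ is an ε-almost period
    intro x
    show |(∑' n : ℤ, termF φ (x + (t:ℝ)) n) - ∑' n : ℤ, termF φ x n| < ε
    -- reindexing
    have hre : (∑' n : ℤ, termF φ (x + (t:ℝ)) n)
        = ∑' n : ℤ, (φ (x + (n:ℝ) + epsZ (n - t)) - φ (x + (n:ℝ) - epsZ (n - t))) := by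
      rw [← (Equiv.subRight t).tsum_eq (fun n => termF φ (x + (t:ℝ)) n)]
      apply tsum_congr
      intro n
      simp only [Equiv.subRight_apply]
      unfold termF
      have harg : x + (t:ℝ) + ((n - t : ℤ):ℝ) = x + (n:ℝ) := by push_cast; ring
      rw [harg]
    rw [hre]
    set S : Finset ℤ := Finset.Icc ⌈-x - (M₁ + 1)⌉ ⌊-x + (M₁ + 1)⌋ with hSdef
    -- outside S the terms vanish
    have hout : ∀ n : ℤ, n ∉ S → M₁ + 1 ≤ |x + (n:ℝ)| := by
      intro n hn
      rw [hSdef, Finset.mem_Icc] at hn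
      push_neg at hn
      rcases lt_or_ge n ⌈-x - (M₁ + 1)⌉ with h | h
      · have h1 : (n:ℝ) + 1 ≤ (⌈-x - (M₁ + 1)⌉ : ℝ) := by exact_mod_cast h
        have h2 := Int.ceil_lt_add_one (-x - (M₁ + 1))
        have h3 : x + (n:ℝ) ≤ -(M₁ + 1) := by linarith
        rw [abs_of_nonpos (by linarith)]
        linarith
      · have h := hn h
        have h1 : (⌊-x + (M₁ + 1)⌋ : ℝ) + 1 ≤ (n:ℝ) := by exact_mod_cast h
        have h2 := Int.sub_one_lt_floor (-x + (M₁ + 1))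
        have h3 : M₁ + 1 ≤ x + (n:ℝ) := by linarith
        rw [abs_of_nonneg (by linarith)]
        linarith
    have hvan : ∀ (e : ℤ → ℝ), (∀ m, 0 ≤ e m) → (∀ m, e m ≤ 1/4) →
        ∀ n ∉ S, φ (x + (n:ℝ) + e n) - φ (x + (n:ℝ) - e n) = 0 := by
      intro e he0 he4 n hn
      have h := hout n hn
      have h0 := he0 n
      have h4 := he4 n
      rcases le_abs.mp h with h' | h'
      · have hz1 : φ (x + (n:ℝ) + e n) = 0 :=
          hM₁ _ (by rw [abs_of_nonneg (by linarith)]; linarith)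
        have hz2 : φ (x + (n:ℝ) - e n) = 0 :=
          hM₁ _ (by rw [abs_of_nonneg (by linarith)]; linarith)
        rw [hz1, hz2, sub_self]
      · have hz1 : φ (x + (n:ℝ) + e n) = 0 :=
          hM₁ _ (by rw [abs_of_nonpos (by linarith)]; linarith)
        have hz2 : φ (x + (n:ℝ) - e n) = 0 :=
          hM₁ _ (by rw [abs_of_nonpos (by linarith)]; linarith)
        rw [hz1, hz2, sub_self]
    have hvan₁ : ∀ n ∉ S,
        φ (x + (n:ℝ) + epsZ (n - t)) - φ (x + (n:ℝ) - epsZ (n - t)) = 0 :=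
      fun n hn => hvan (fun m => epsZ (m - t)) (fun m => epsZ_nonneg _)
        (fun m => epsZ_le_quarter _) n hn
    have hvan₂ : ∀ n ∉ S, termF φ x n = 0 :=
      fun n hn => hvan epsZ epsZ_nonneg epsZ_le_quarter n hn
    have hs₁ : Summable
        (fun n : ℤ => φ (x + (n:ℝ) + epsZ (n - t)) - φ (x + (n:ℝ) - epsZ (n - t))) :=
      summable_of_ne_finset_zero hvan₁
    have hs₂ : Summable (termF φ x) := summable_of_ne_finset_zero hvan₂
    rw [← Summable.tsum_sub hs₁ hs₂]
    rw [tsum_eq_sum (s := S) (fun n hn => by rw [hvan₁ n hn, hvan₂ n hn, sub_self])]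
    -- per-term bound
    have hterm : ∀ n ∈ S,
        |(φ (x + (n:ℝ) + epsZ (n - t)) - φ (x + (n:ℝ) - epsZ (n - t))) - termF φ x n|
          ≤ 2 * ε' := by
      intro n _
      have hd : |epsZ (n - t) - epsZ n| ≤ 1/((L:ℝ)+1)^2 := epsZ_shift hL1 ht n
      have hb1 : |φ (x + (n:ℝ) + epsZ (n - t)) - φ (x + (n:ℝ) + epsZ n)| ≤ ε' := by
        apply le_of_lt
        have hdist : dist (x + (n:ℝ) + epsZ (n - t)) (x + (n:ℝ) + epsZ n) < δ := by
          rw [Real.dist_eq]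
          have heq : (x + (n:ℝ) + epsZ (n - t)) - (x + (n:ℝ) + epsZ n)
              = epsZ (n - t) - epsZ n := by ring
          rw [heq]
          exact lt_of_le_of_lt hd hLb
        have := hδ' hdist
        rwa [Real.dist_eq] at this
      have hb2 : |φ (x + (n:ℝ) - epsZ (n - t)) - φ (x + (n:ℝ) - epsZ n)| ≤ ε' := by
        apply le_of_lt
        have hdist : dist (x + (n:ℝ) - epsZ (n - t)) (x + (n:ℝ) - epsZ n) < δ := by
          rw [Real.dist_eq]
          have heq : (x + (n:ℝ) - epsZ (n - t)) - (x + (n:ℝ) - epsZ n)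
              = epsZ n - epsZ (n - t) := by ring
          rw [heq, abs_sub_comm]
          exact lt_of_le_of_lt hd hLb
        have := hδ' hdist
        rwa [Real.dist_eq] at this
      have hid : (φ (x + (n:ℝ) + epsZ (n - t)) - φ (x + (n:ℝ) - epsZ (n - t))) - termF φ x n
          = (φ (x + (n:ℝ) + epsZ (n - t)) - φ (x + (n:ℝ) + epsZ n))
            - (φ (x + (n:ℝ) - epsZ (n - t)) - φ (x + (n:ℝ) - epsZ n)) := by
        unfold termF; ring
      rw [hid]
      calc |(φ (x + (n:ℝ) + epsZ (n - t)) - φ (x + (n:ℝ) + epsZ n))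
            - (φ (x + (n:ℝ) - epsZ (n - t)) - φ (x + (n:ℝ) - epsZ n))|
          ≤ |φ (x + (n:ℝ) + epsZ (n - t)) - φ (x + (n:ℝ) + epsZ n)|
            + |φ (x + (n:ℝ) - epsZ (n - t)) - φ (x + (n:ℝ) - epsZ n)| := abs_sub' _ _
        _ ≤ ε' + ε' := add_le_add hb1 hb2
        _ = 2 * ε' := by ring
    have hcard : (S.card : ℝ) ≤ (Nb : ℝ) := by
      have hcard' : S.card ≤ Nb := by
        rw [hSdef, Int.card_Icc, Int.toNat_le]
        have hfl : (⌊-x + (M₁ + 1)⌋ : ℝ) ≤ -x + (M₁ + 1) := Int.floor_le _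
        have hcl : -x - (M₁ + 1) ≤ (⌈-x - (M₁ + 1)⌉ : ℝ) := Int.le_ceil _
        have hlt : ((⌊-x + (M₁ + 1)⌋ + 1 - ⌈-x - (M₁ + 1)⌉ : ℤ) : ℝ) < (Nb:ℝ) := by
          push_cast
          linarith
        exact_mod_cast hlt.le
      exact_mod_cast hcard'
    calc |∑ n ∈ S, ((φ (x + (n:ℝ) + epsZ (n - t)) - φ (x + (n:ℝ) - epsZ (n - t)))
            - termF φ x n)|
        ≤ ∑ n ∈ S, |(φ (x + (n:ℝ) + epsZ (n - t)) - φ (x + (n:ℝ) - epsZ (n - t)))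
            - termF φ x n| := Finset.abs_sum_le_sum_abs _ _
      _ ≤ ∑ _n ∈ S, 2 * ε' := Finset.sum_le_sum hterm
      _ = S.card * (2 * ε') := by rw [Finset.sum_const, nsmul_eq_mul]
      _ ≤ Nb * (2 * ε') := mul_le_mul_of_nonneg_right hcard (by positivity)
      _ < ε := by
          rw [hε'def]
          have hNb2 : (0:ℝ) < 2 * Nb + 2 := by positivity
          have heq : (Nb:ℝ) * (2 * (ε / (2 * Nb + 2))) = ε * (2 * Nb) / (2 * Nb + 2) := by
            field_simp
          rw [heq, div_lt_iff₀ hNb2]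
          nlinarith
  · -- distance bound
    rw [Real.dist_eq]
    have h1 := Int.floor_le (c / 2 ^ L)
    have h2 := Int.lt_floor_add_one (c / 2 ^ L)
    have ht1 : (t:ℝ) = 2 ^ L * (⌊c / (2:ℝ) ^ L⌋ : ℝ) := by rw [htdef]; push_cast; ring
    rw [abs_lt, ht1]
    rw [le_div_iff₀ h2Lpos] at h1
    rw [div_lt_iff₀ h2Lpos] at h2
    constructor
    · nlinarith
    · nlinarith

/-! ### The counterexample bump function -/

noncomputable def bump (t : ℝ) : ℝ := max 0 (1 - 16 * |t|)

lemma bump_cont : Continuous bump := by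
  apply continuous_const.max
  fun_prop

lemma bump_cs : HasCompactSupport bump := by
  apply HasCompactSupport.intro (isCompact_Icc (a := (-1:ℝ)) (b := 1))
  intro u hu
  rw [Set.mem_Icc] at hu
  push_neg at hu
  have h1 : 1 ≤ |u| := by
    rcases lt_or_ge u (-1) with h | h
    · rw [abs_of_nonpos (by linarith)]; linarith
    · have := hu h
      rw [abs_of_nonneg (by linarith)]; linarith
  unfold bump
  rw [max_eq_left (by linarith)]

lemma bump_zero {u : ℝ} (h : 1/16 ≤ |u|) : bump u = 0 := by
  unfold bump
  rw [max_eq_left (by linarith)]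

lemma bump_small {u : ℝ} (h : bump u ≠ 0) : |u| < 1/16 := by
  by_contra hc
  push_neg at hc
  exact h (bump_zero hc)

lemma bump_at_zero : bump 0 = 1 := by unfold bump; norm_num

/-- even nonzero integers have absolute value at least 2 -/
lemma evennz_two_le (m : EvenNZ) : (2:ℝ) ≤ |(m.1:ℝ)| := by
  have h3 : (2:ℤ) ≤ |m.1| := Int.le_of_dvd (abs_pos.mpr m.2.1) ((dvd_abs _ _).mpr m.2.2)
  exact_mod_cast h3

lemma evennz_sep {m n : EvenNZ} (h : m ≠ n) : (2:ℝ) ≤ |(m.1:ℝ) - (n.1:ℝ)| := by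
  have h1 : m.1 - n.1 ≠ 0 := by
    intro e
    apply h
    apply Subtype.ext
    omega
  have h2 : (2:ℤ) ∣ (m.1 - n.1) := dvd_sub m.2.2 n.2.2
  have h3 : (2:ℤ) ≤ |m.1 - n.1| := Int.le_of_dvd (abs_pos.mpr h1) ((dvd_abs _ _).mpr h2)
  have h4 : ((|m.1 - n.1| : ℤ) : ℝ) = |(m.1:ℝ) - (n.1:ℝ)| := by push_cast; ring_nf
  rw [← h4]
  exact_mod_cast h3

def twoE : EvenNZ := ⟨2, by norm_num, dvd_refl 2⟩

lemma twoE_val : ((twoE.1 : ℤ) : ℝ) = 2 := by norm_num [twoE]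

/-- Main negative lemma: for any point configuration `b` with `|b n - n| ≤ 1/4`, the
sum of `bump` translates is not almost periodic. -/
lemma not_ap (b : EvenNZ → ℝ) (hb : ∀ n : EvenNZ, |b n - (n.1:ℝ)| ≤ 1/4) :
    ¬ AlmostPeriodic (fun x => ∑' n : EvenNZ, bump (x + b n)) := by
  intro h
  obtain ⟨R, hR, hT⟩ := h (1/2) (by norm_num)
  obtain ⟨τ, hτ, hd⟩ := hT (R + 2)
  rw [Real.dist_eq] at hd
  have hτ2 : (2:ℝ) < τ := by
    rcases abs_lt.mp hd with ⟨h1, _⟩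
    linarith
  -- the sum at the points `-(b n)` equals 1
  have hfb : ∀ n : EvenNZ, (∑' m : EvenNZ, bump (-(b n) + b m)) = 1 := by
    intro n
    rw [tsum_eq_single n ?_]
    · rw [neg_add_cancel, bump_at_zero]
    · intro m hmn
      apply bump_zero
      have hsep := evennz_sep hmn
      have h1 := hb m
      have h2 := hb n
      have hident : (m.1:ℝ) - (n.1:ℝ) = ((-(b n) + b m) + (-(b m - (m.1:ℝ)))) + (b n - (n.1:ℝ)) := by
        ring
      have h3 : |(m.1:ℝ) - (n.1:ℝ)|
          ≤ |(-(b n) + b m)| + |b m - (m.1:ℝ)| + |b n - (n.1:ℝ)| := by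
        rw [hident]
        calc |((-(b n) + b m) + (-(b m - (m.1:ℝ)))) + (b n - (n.1:ℝ))|
            ≤ |(-(b n) + b m) + (-(b m - (m.1:ℝ)))| + |b n - (n.1:ℝ)| := abs_add_le _ _
          _ ≤ |(-(b n) + b m)| + |(-(b m - (m.1:ℝ)))| + |b n - (n.1:ℝ)| := by
              linarith [abs_add_le (-(b n) + b m) (-(b m - (m.1:ℝ)))]
          _ = |(-(b n) + b m)| + |b m - (m.1:ℝ)| + |b n - (n.1:ℝ)| := by rw [abs_neg]
      linarith
  -- apply the almost-period at `-(b twoE)`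
  have h2' : |(∑' m : EvenNZ, bump ((-(b twoE) + τ) + b m))
      - ∑' m : EvenNZ, bump (-(b twoE) + b m)| < 1/2 := hτ (-(b twoE))
  rw [hfb twoE] at h2'
  have hex : ∃ m : EvenNZ, bump ((-(b twoE) + τ) + b m) ≠ 0 := by
    by_contra hc
    push_neg at hc
    have hz : (∑' m : EvenNZ, bump ((-(b twoE) + τ) + b m)) = 0 :=
      (tsum_congr hc).trans tsum_zero
    rw [hz] at h2'
    norm_num at h2'
  obtain ⟨m, hm⟩ := hex
  have hη : |(-(b twoE) + τ) + b m| < 1/16 := bump_small hm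
  set η : ℝ := (-(b twoE) + τ) + b m with hηdef
  set k : ℤ := 2 - m.1 with hkdef
  have hk0 : k ≠ 0 := by
    intro e
    have hm1 : m.1 = 2 := by omega
    have hm2 : m = twoE := Subtype.ext hm1
    have hτeq : η = τ := by rw [hηdef, hm2]; ring
    rw [hτeq] at hη
    rcases abs_lt.mp hη with ⟨_, h2⟩
    linarith
  have hk2 : (2:ℤ) ∣ k := by
    rw [hkdef]
    exact dvd_sub ⟨1, rfl⟩ m.2.2
  set kk : EvenNZ := ⟨k, hk0, hk2⟩ with hkkdef
  -- the translated sum vanishes at `-(b kk)`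
  have hzero : (∑' m' : EvenNZ, bump ((-(b kk) + τ) + b m')) = 0 := by
    have hall : ∀ m' : EvenNZ, bump ((-(b kk) + τ) + b m') = 0 := by
      intro m'
      apply bump_zero
      have h2le := evennz_two_le m'
      have hbt := hb twoE
      have hbm := hb m
      have hbk := hb kk
      have hbm' := hb m'
      rw [twoE_val] at hbt
      have hkr : ((kk.1 : ℤ) : ℝ) = 2 - (m.1:ℝ) := by
        show ((k : ℤ) : ℝ) = 2 - (m.1:ℝ)
        rw [hkdef]
        push_cast
        ring
      have hident : (m'.1:ℝ) = (((((-(b kk) + τ) + b m') + (-η)) + (-(b twoE - 2)))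
          + (b m - (m.1:ℝ))) + ((b kk - ((kk.1:ℤ):ℝ)) + (-(b m' - (m'.1:ℝ)))) := by
        rw [hηdef, hkr]
        ring
      have h6 : |(m'.1:ℝ)| ≤ |(-(b kk) + τ) + b m'| + |η| + |b twoE - 2|
          + |b m - (m.1:ℝ)| + (|b kk - ((kk.1:ℤ):ℝ)| + |b m' - (m'.1:ℝ)|) := by
        have h0 := congrArg abs hident
        have a1 := abs_add_le (((((-(b kk) + τ) + b m') + (-η)) + (-(b twoE - 2)))
          + (b m - (m.1:ℝ))) ((b kk - ((kk.1:ℤ):ℝ)) + (-(b m' - (m'.1:ℝ))))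
        have a2 := abs_add_le ((((-(b kk) + τ) + b m') + (-η)) + (-(b twoE - 2))) (b m - (m.1:ℝ))
        have a3 := abs_add_le (((-(b kk) + τ) + b m') + (-η)) (-(b twoE - 2))
        have a4 := abs_add_le ((-(b kk) + τ) + b m') (-η)
        have a5 := abs_add_le (b kk - ((kk.1:ℤ):ℝ)) (-(b m' - (m'.1:ℝ)))
        simp only [abs_neg] at a1 a2 a3 a4 a5
        rw [h0]
        linarith
      have hη' := abs_lt.mp hη
      linarith [hη'.1, hη'.2]
    calc (∑' m' : EvenNZ, bump ((-(b kk) + τ) + b m'))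
        = ∑' _ : EvenNZ, (0:ℝ) := tsum_congr hall
      _ = 0 := tsum_zero
  have h3' : |(∑' m' : EvenNZ, bump ((-(b kk) + τ) + b m'))
      - ∑' m' : EvenNZ, bump (-(b kk) + b m')| < 1/2 := hτ (-(b kk))
  rw [hzero, hfb kk] at h3'
  norm_num at h3'

lemma aplus_dev (n : EvenNZ) : |aplus n - (n.1:ℝ)| ≤ 1/4 := by
  have h1 : 1 ≤ alphaVal n := one_le_alpha_s18 n.2
  have h2 : (2:ℝ) ≤ (alphaVal n : ℝ) + 1 := by
    have : (1:ℝ) ≤ (alphaVal n : ℝ) := by exact_mod_cast h1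
    linarith
  have heq : aplus n - (n.1:ℝ) = 1 / ((alphaVal n : ℝ) + 1) ^ 2 := by
    unfold aplus; ring
  rw [heq, abs_of_pos (by positivity)]
  rw [div_le_div_iff₀ (by positivity) (by norm_num)]
  nlinarith

lemma aminus_dev (n : EvenNZ) : |aminus n - (n.1:ℝ)| ≤ 1/4 := by
  have heq : aminus n - (n.1:ℝ) = -(1 / ((alphaVal n : ℝ) + 1) ^ 2) := by
    unfold aminus; ring
  rw [heq, abs_neg, abs_of_pos (by positivity)]
  have h1 : 1 ≤ alphaVal n := one_le_alpha_s18 n.2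
  have h2 : (2:ℝ) ≤ (alphaVal n : ℝ) + 1 := by
    have : (1:ℝ) ≤ (alphaVal n : ℝ) := by exact_mod_cast h1
    linarith
  rw [div_le_div_iff₀ (by positivity) (by norm_num)]
  nlinarith

end Aux

/-- the signed set with mass `+1` at `a_n^+` and `−1` at `a_n^−` is an almost
periodic signed multiple discrete set (its measure is almost periodic in the weak sense),
but neither its positive part `A⁺` nor its negative part `A⁻` is almost periodic. -/
theorem statement18 :
    (∀ φ : ℝ → ℝ, Continuous φ → HasCompactSupport φ →
      AlmostPeriodic fun x => ∑' n : EvenNZ, (φ (x + aplus n) - φ (x + aminus n))) ∧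
    ¬ (∀ φ : ℝ → ℝ, Continuous φ → HasCompactSupport φ →
      AlmostPeriodic fun x => ∑' n : EvenNZ, φ (x + aplus n)) ∧
    ¬ (∀ φ : ℝ → ℝ, Continuous φ → HasCompactSupport φ →
      AlmostPeriodic fun x => ∑' n : EvenNZ, φ (x + aminus n)) := by
  refine ⟨part1, ?_, ?_⟩
  · intro h
    exact not_ap aplus aplus_dev (h bump bump_cont bump_cs)
  · intro h
    exact not_ap aminus aminus_dev (h bump bump_cont bump_cs)
end
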